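/- arXiv:1211.3724 — 6 statements merged into one kernel-verified Lean document; each statement's English description precedes it below -/
import Mathlib

section
/- Let X be a set and ψ₁, ψ₂ : X → ℝ∪{+∞}. Define v₁(τ) = inf{ψ₁(x) : x ∈ X, ψ₂(x) ≤ τ} and v₂(σ) = inf{ψ₂(x) : x ∈ X, ψ₁(x) ≤ σ}. Suppose τ is such that the set of minimizers of the problem defining v₁(τ) is nonempty and every minimizer x satisfies ψ₂(x) = τ. Then v₂(v₁(τ)) = τ. -/
noncomputable section

/-- Value function of `min ψ₁ s.t. ψ₂ ≤ τ`. -/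
def valFn {X : Type*} (ψ₁ ψ₂ : X → EReal) (τ : EReal) : EReal :=
  ⨅ x ∈ {x | ψ₂ x ≤ τ}, ψ₁ x

/-- Minimizers of `min ψ₁ s.t. ψ₂ ≤ τ`. -/
def argminSet {X : Type*} (ψ₁ ψ₂ : X → EReal) (τ : EReal) : Set X :=
  {x | ψ₂ x ≤ τ ∧ ψ₁ x = valFn ψ₁ ψ₂ τ}

/-- if the argmin of `min{ψ₁ : ψ₂ ≤ τ}` is nonempty and every minimizer
is active (`ψ₂ x = τ`), then `v₂ (v₁ τ) = τ`. -/
theorem stmt0 {X : Type*} (ψ₁ ψ₂ : X → EReal) (τ : EReal)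
    (hne : (argminSet ψ₁ ψ₂ τ).Nonempty)
    (hact : ∀ x ∈ argminSet ψ₁ ψ₂ τ, ψ₂ x = τ) :
    valFn ψ₂ ψ₁ (valFn ψ₁ ψ₂ τ) = τ := by
  obtain ⟨x₀, hx₀⟩ := hne
  have hx₀' := hx₀
  obtain ⟨hfeas, hval⟩ := hx₀
  have hact₀ : ψ₂ x₀ = τ := hact x₀ hx₀'
  apply le_antisymm
  · -- v₂ (v₁ τ) ≤ ψ₂ x₀ = τ since ψ₁ x₀ ≤ v₁ τ
    calc valFn ψ₂ ψ₁ (valFn ψ₁ ψ₂ τ) ≤ ψ₂ x₀ := by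
          apply iInf₂_le
          exact le_of_eq hval
      _ = τ := hact₀
  · -- τ ≤ ψ₂ x for all x with ψ₁ x ≤ v₁ τ
    apply le_iInf₂
    intro x hx
    rcases le_total (ψ₂ x) τ with h | h
    · -- x feasible for v₁, so ψ₁ x ≥ v₁ τ, hence equality, so x ∈ argmin
      have h1 : valFn ψ₁ ψ₂ τ ≤ ψ₁ x := iInf₂_le x h
      have h2 : ψ₁ x = valFn ψ₁ ψ₂ τ := le_antisymm hx h1
      exact le_of_eq (hact x ⟨h, h2⟩).symm
    · exact h
end
end

section
/- Under the same hypotheses (argmin of the problem min{ψ₁(x) : ψ₂(x) ≤ τ} is nonempty and contained in {x : ψ₂(x) = τ}), the set of minimizers of min{ψ₁(x) : ψ₂(x) ≤ τ} equals the set of minimizers of min{ψ₂(x) : ψ₁(x) ≤ v₁(τ)}, and every such minimizer x satisfies ψ₁(x) = v₁(τ). -/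
noncomputable section

theorem valFn_le {X : Type*} (ψ₁ ψ₂ : X → EReal) (τ : EReal) (x : X) (h : ψ₂ x ≤ τ) :
    valFn ψ₁ ψ₂ τ ≤ ψ₁ x := iInf₂_le x h

theorem le_valFn {X : Type*} (ψ₁ ψ₂ : X → EReal) (τ c : EReal)
    (h : ∀ x, ψ₂ x ≤ τ → c ≤ ψ₁ x) : c ≤ valFn ψ₁ ψ₂ τ := le_iInf₂ h

/-- under the same hypotheses, the two argmin sets coincide, and every
minimizer `x` satisfies `ψ₁ x = v₁ τ`. -/
theorem stmt1 {X : Type*} (ψ₁ ψ₂ : X → EReal) (τ : EReal)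
    (hne : (argminSet ψ₁ ψ₂ τ).Nonempty)
    (hact : ∀ x ∈ argminSet ψ₁ ψ₂ τ, ψ₂ x = τ) :
    argminSet ψ₁ ψ₂ τ = argminSet ψ₂ ψ₁ (valFn ψ₁ ψ₂ τ) ∧
    ∀ x ∈ argminSet ψ₁ ψ₂ τ, ψ₁ x = valFn ψ₁ ψ₂ τ := by
  obtain ⟨x₀, hx₀f, hx₀v⟩ := hne
  have hτ0 : ψ₂ x₀ = τ := hact x₀ ⟨hx₀f, hx₀v⟩
  set v := valFn ψ₁ ψ₂ τ with hv
  -- value of the reverse problem is τ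
  have hkey : ∀ x, ψ₁ x ≤ v → τ ≤ ψ₂ x := by
    intro x hx
    by_contra h
    push_neg at h
    have hfeas : ψ₂ x ≤ τ := le_of_lt h
    have hge : v ≤ ψ₁ x := iInf₂_le x hfeas
    have hmem : x ∈ argminSet ψ₁ ψ₂ τ := ⟨hfeas, le_antisymm hx hge⟩
    exact absurd (hact x hmem) (ne_of_lt h)
  have hval : valFn ψ₂ ψ₁ v = τ := by
    apply le_antisymm
    · calc valFn ψ₂ ψ₁ v ≤ ψ₂ x₀ := valFn_le ψ₂ ψ₁ v x₀ (le_of_eq hx₀v)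
        _ = τ := hτ0
    · exact le_valFn _ _ _ _ hkey
  constructor
  · ext x
    constructor
    · rintro ⟨hf, hm⟩
      exact ⟨le_of_eq hm, by rw [hval]; exact hact x ⟨hf, hm⟩⟩
    · rintro ⟨h1, h2⟩
      rw [hval] at h2
      exact ⟨le_of_eq h2, le_antisymm h1 (valFn_le ψ₁ ψ₂ τ x (le_of_eq h2))⟩
  · exact fun x hx => hx.2
end
end

section
/- Let φ : ℝⁿ → ℝ∪{+∞} be closed, proper, convex, let τ > inf φ, let x̄ satisfy φ(x̄) ≤ τ, and let s̄ be in the normal cone to lev(φ,τ) at x̄. Define S₁ = argmin_{μ ≥ 0} [τμ + (φ*)^π(s̄, μ)] and S₂ = {μ̄ ≥ 0 : s̄ ∈ μ̄⁺∂φ(x̄) and μ̄(φ(x̄) − τ) = 0}, where μ⁺∂φ(x) = μ∂φ(x) if μ > 0 and the normal cone to dom φ at x if μ = 0. If either S₁ or S₂ is nonempty, then S₁ = S₂, and σ_{lev(φ,τ)}(s̄) = inf_{μ ≥ 0} [τμ + (φ*)^π(s̄, μ)]. -/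
open scoped Pointwise
noncomputable section

abbrev En (n : ℕ) := EuclideanSpace ℝ (Fin n)

/-- Fenchel conjugate. -/
def econj {n : ℕ} (h : En n → EReal) (y : En n) : EReal :=
  ⨆ x : En n, (((inner ℝ y x : ℝ)) : EReal) - h x

/-- Horizon (recession) function. -/
def ehorizon {n : ℕ} (h : En n → EReal) (z : En n) : EReal :=
  ⨆ x ∈ {x : En n | h x ≠ ⊤}, (h (x + z) - h x)

/-- Closed perspective function. -/
def epersp {n : ℕ} (h : En n → EReal) (p : En n × ℝ) : EReal :=
  if 0 < p.2 then ((p.2 : ℝ) : EReal) * h (p.2⁻¹ • p.1)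
  else if p.2 = 0 then ehorizon h p.1 else ⊤

/-- Support function of a set. -/
def esupp {n : ℕ} (C : Set (En n)) (y : En n) : EReal :=
  ⨆ x ∈ C, (((inner ℝ y x : ℝ)) : EReal)

/-- A proper function: somewhere finite and never `-∞`. -/
def IsProperFn {n : ℕ} (h : En n → EReal) : Prop := (∃ x, h x ≠ ⊤) ∧ ∀ x, h x ≠ ⊥

/-- Convexity of an extended-real-valued function, via convexity of its epigraph. -/
def IsConvexFn {n : ℕ} (h : En n → EReal) : Prop :=
  Convex ℝ {p : En n × ℝ | h p.1 ≤ (p.2 : EReal)}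

/-- Normal cone to a convex set `C` at `x` (empty when `x ∉ C`). -/
def enormalCone {n : ℕ} (C : Set (En n)) (x : En n) : Set (En n) :=
  {v | x ∈ C ∧ ∀ y ∈ C, (inner ℝ v (y - x) : ℝ) ≤ 0}

/-- Convex subdifferential of an extended-real-valued function. -/
def esubdiff {n : ℕ} (h : En n → EReal) (x : En n) : Set (En n) :=
  {v | ∀ y : En n, h x + (((inner ℝ v (y - x) : ℝ)) : EReal) ≤ h y}

/-- `μ⁺∂φ(x)`: `μ ∂φ(x)` for `μ > 0`, the normal cone to `dom φ` for `μ = 0`. -/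
def muPlusSubdiff {n : ℕ} (μ : ℝ) (h : En n → EReal) (x : En n) : Set (En n) :=
  if 0 < μ then μ • esubdiff h x else enormalCone {y | h y ≠ ⊤} x

variable {n : ℕ} {φ : En n → EReal}

lemma real_of_dom (hproper : IsProperFn φ) {z : En n} (hz : φ z ≠ ⊤) :
    ∃ r : ℝ, φ z = (r : EReal) := by
  lift φ z to ℝ using ⟨hz, hproper.2 z⟩ with r
  exact ⟨r, rfl⟩

lemma le_econj (y z : En n) {r : ℝ} (hz : φ z = (r : EReal)) :
    ((inner ℝ y z - r : ℝ) : EReal) ≤ econj φ y := by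
  have := le_iSup (fun x => (((inner ℝ y x : ℝ)) : EReal) - φ x) z
  rw [hz] at this
  rw [econj]
  simpa [EReal.coe_sub] using this

lemma econj_le {y : En n} {c : EReal}
    (h : ∀ z, (((inner ℝ y z : ℝ)) : EReal) - φ z ≤ c) : econj φ y ≤ c := iSup_le h

lemma cvx_ineq (hconvex : IsConvexFn φ) {x₁ x₂ : En n} {r₁ r₂ a b : ℝ}
    (h₁ : φ x₁ ≤ (r₁ : EReal)) (h₂ : φ x₂ ≤ (r₂ : EReal))
    (ha : 0 ≤ a) (hb : 0 ≤ b) (hab : a + b = 1) :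
    φ (a • x₁ + b • x₂) ≤ ((a * r₁ + b * r₂ : ℝ) : EReal) := by
  have := hconvex (x := (x₁, r₁)) (y := (x₂, r₂)) h₁ h₂ ha hb hab
  simpa using this

lemma sub_top' (c : ℝ) : (c : EReal) - ⊤ = ⊥ := rfl

lemma exists_dom_econj (hclosed : LowerSemicontinuous φ) (hproper : IsProperFn φ)
    (hconvex : IsConvexFn φ) : ∃ a : En n, econj φ a ≠ ⊤ := by
  obtain ⟨x₀, hx₀⟩ := hproper.1
  obtain ⟨r₀, hr₀⟩ := real_of_dom hproper hx₀
  set S : Set (En n × ℝ) := {p : En n × ℝ | φ p.1 ≤ (p.2 : EReal)} with hSdef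
  have hSclosed : IsClosed S := by
    have h1 : IsClosed {q : En n × EReal | φ q.1 ≤ q.2} := by
      have := lowerSemicontinuous_iff_isClosed_epigraph.1 hclosed
      exact this
    have h2 : Continuous fun p : En n × ℝ => ((p.1, (p.2 : EReal)) : En n × EReal) :=
      continuous_fst.prodMk (continuous_coe_real_ereal.comp continuous_snd)
    exact h1.preimage h2
  have hxS : (x₀, r₀ - 1) ∉ S := by
    simp only [hSdef, Set.mem_setOf_eq, hr₀]
    rw [EReal.coe_le_coe_iff]
    push_neg; linarith
  obtain ⟨f, u, hfu, hfS⟩ := geometric_hahn_banach_point_closed hconvex hSclosed hxS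
  set b : ℝ := f (0, 1) with hb
  have hsplit : ∀ z : En n, ∀ t : ℝ, f (z, t) = f (z, 0) + t * b := by
    intro z t
    have : (z, t) = (z, 0) + t • ((0 : En n), (1 : ℝ)) := by
      simp [Prod.ext_iff]
    rw [this, map_add, map_smul]
    simp [hb]
  have hbpos : 0 < b := by
    have h1 : u < f (x₀, r₀) := hfS _ (by simp [hSdef, hr₀])
    have h2 := hfu
    rw [hsplit x₀ r₀] at h1
    rw [hsplit x₀ (r₀ - 1)] at h2
    nlinarith
  set a : En n := (-b⁻¹) • ((InnerProductSpace.toDual ℝ (En n)).symm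
      (f.comp (ContinuousLinearMap.inl ℝ (En n) ℝ))) with ha
  have hinner : ∀ z : En n, (inner ℝ a z : ℝ) = -b⁻¹ * f (z, 0) := by
    intro z
    rw [ha, real_inner_smul_left, InnerProductSpace.toDual_symm_apply]
    simp
  refine ⟨a, ne_top_of_le_ne_top (EReal.coe_ne_top (-u/b)) (econj_le ?_)⟩
  intro z
  by_cases hz : φ z = ⊤
  · rw [hz, sub_top']; exact bot_le
  · obtain ⟨ρ, hρ⟩ := real_of_dom hproper hz
    have hmem : (z, ρ) ∈ S := by simp [hSdef, hρ]
    have h3 := hfS _ hmem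
    rw [hsplit z ρ] at h3
    rw [hρ, ← EReal.coe_sub, EReal.coe_le_coe_iff, hinner z]
    rw [le_div_iff₀ hbpos]
    have hib : b⁻¹ * b = 1 := inv_mul_cancel₀ hbpos.ne'
    have hexp : (-b⁻¹ * f (z, 0) - ρ) * b = -(b⁻¹ * b) * f (z, 0) - ρ * b := by ring
    rw [hib] at hexp
    linarith [hexp]

lemma econj_ne_bot {z : En n} {r : ℝ} (hz : φ z = (r : EReal)) (y : En n) :
    econj φ y ≠ ⊥ := by
  intro h
  have := le_econj y z hz
  rw [h, le_bot_iff] at this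
  exact EReal.coe_ne_bot _ this

lemma real_of_econj (hproper : IsProperFn φ) {z : En n} {r : ℝ} (hz : φ z = (r : EReal))
    {y : En n} (hy : econj φ y ≠ ⊤) : ∃ ρ : ℝ, econj φ y = (ρ : EReal) := by
  lift econj φ y to ℝ using ⟨hy, econj_ne_bot hz y⟩ with ρ
  exact ⟨ρ, rfl⟩

lemma ehorizon_le (hproper : IsProperFn φ) {w : En n} {r : ℝ} (hw : φ w = (r : EReal))
    {s : En n} {c : ℝ} (hc : ∀ z, φ z ≠ ⊤ → (inner ℝ s z : ℝ) ≤ c) :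
    ehorizon (econj φ) s ≤ (c : EReal) := by
  rw [ehorizon]
  refine iSup₂_le fun x hx => ?_
  obtain ⟨ρ, hρ⟩ := real_of_econj hproper hw hx
  rw [hρ, EReal.sub_le_iff_le_add (Or.inl (EReal.coe_ne_bot ρ)) (Or.inl (EReal.coe_ne_top ρ))]
  rw [← EReal.coe_add]
  refine econj_le fun z => ?_
  by_cases hz : φ z = ⊤
  · rw [hz, sub_top']; exact bot_le
  · obtain ⟨q, hq⟩ := real_of_dom hproper hz
    have h1 : (inner ℝ x z - q : ℝ) ≤ ρ := by
      have := le_econj x z hq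
      rw [hρ, EReal.coe_le_coe_iff] at this
      exact this
    have h2 := hc z hz
    rw [hq, ← EReal.coe_sub, EReal.coe_le_coe_iff, inner_add_left]
    linarith

lemma ehorizon_ge (hproper : IsProperFn φ) {a : En n} (ha : econj φ a ≠ ⊤)
    {y : En n} {ρy : ℝ} (hy : φ y = (ρy : EReal)) (s : En n) :
    ((inner ℝ s y : ℝ) : EReal) ≤ ehorizon (econj φ) s := by
  set H := ehorizon (econj φ) s with hH
  by_cases htop : H = ⊤
  · rw [htop]; exact le_top
  obtain ⟨A, hA⟩ := real_of_econj hproper hy ha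
  have hstep : ∀ x : En n, econj φ x ≠ ⊤ → econj φ (x + s) - econj φ x ≤ H := by
    intro x hx
    exact le_iSup₂ (f := fun x (_ : econj φ x ≠ ⊤) => econj φ (x + s) - econj φ x) x hx
  have hbot : H ≠ ⊥ := by
    intro hb
    have h1 := hstep a ha
    rw [hb, le_bot_iff, hA] at h1
    by_cases h2 : econj φ (a + s) = ⊤
    · rw [h2, EReal.top_sub_coe] at h1
      simp at h1
    · obtain ⟨B, hB⟩ := real_of_econj hproper hy h2
      rw [hB, ← EReal.coe_sub] at h1
      exact EReal.coe_ne_bot _ h1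
  lift H to ℝ using ⟨htop, hbot⟩ with Hr
  have hind : ∀ k : ℕ, econj φ (a + (k : ℝ) • s) ≤ ((A + k * Hr : ℝ) : EReal) := by
    intro k
    induction k with
    | zero => simpa using hA.le
    | succ k ih =>
      have hne : econj φ (a + (k : ℝ) • s) ≠ ⊤ :=
        ne_top_of_le_ne_top (EReal.coe_ne_top _) ih
      obtain ⟨W, hW⟩ := real_of_econj hproper hy hne
      have h1 := hstep _ hne
      rw [hW, EReal.sub_le_iff_le_add (Or.inl (EReal.coe_ne_bot W))
        (Or.inl (EReal.coe_ne_top W))] at h1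
      have hWle : W ≤ A + k * Hr := by
        rw [hW, EReal.coe_le_coe_iff] at ih; exact ih
      have heq : a + ((k : ℝ) + 1) • s = (a + (k : ℝ) • s) + s := by
        rw [add_smul, one_smul]; abel
      push_cast
      rw [heq]
      calc econj φ ((a + (k : ℝ) • s) + s) ≤ (Hr : EReal) + W := h1
        _ ≤ ((A + k * Hr + Hr : ℝ) : EReal) := by
            rw [← EReal.coe_add, EReal.coe_le_coe_iff]; linarith
        _ = ((A + (k + 1) * Hr : ℝ) : EReal) := by ring_nf
  have hkey : ∀ k : ℕ, inner ℝ a y + k * inner ℝ s y - ρy ≤ A + k * Hr := by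
    intro k
    have h1 := le_econj (a + (k : ℝ) • s) y hy
    have h2 := (h1.trans (hind k))
    rw [EReal.coe_le_coe_iff] at h2
    rw [inner_add_left, real_inner_smul_left] at h2
    linarith
  rw [EReal.coe_le_coe_iff]
  by_contra hcon
  push_neg at hcon
  obtain ⟨k, hk⟩ := exists_nat_gt ((A + ρy - inner ℝ a y) / (inner ℝ s y - Hr))
  have hpos : (0 : ℝ) < inner ℝ s y - Hr := by linarith
  have := hkey k
  rw [div_lt_iff₀ hpos] at hk
  nlinarith

lemma epersp_pos {h : En n → EReal} {s : En n} {μ : ℝ} (hμ : 0 < μ) :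
    epersp h (s, μ) = (μ : EReal) * h (μ⁻¹ • s) := by simp [epersp, hμ]

lemma epersp_zero {h : En n → EReal} {s : En n} :
    epersp h (s, 0) = ehorizon h s := by simp [epersp]

lemma Q_le_of_forall {s : En n} {μ τ c : ℝ} (hμ : 0 < μ) (hproper : IsProperFn φ)
    (h : ∀ z : En n, ∀ q : ℝ, φ z = (q : EReal) → (inner ℝ s z : ℝ) + μ * (τ - q) ≤ c) :
    ((τ * μ : ℝ) : EReal) + epersp (econj φ) (s, μ) ≤ (c : EReal) := by
  rw [epersp_pos hμ]
  have h1 : econj φ (μ⁻¹ • s) ≤ (((c - τ * μ) / μ : ℝ) : EReal) := by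
    refine econj_le fun z => ?_
    by_cases hz : φ z = ⊤
    · rw [hz, sub_top']; exact bot_le
    · obtain ⟨q, hq⟩ := real_of_dom hproper hz
      rw [hq, ← EReal.coe_sub, EReal.coe_le_coe_iff, real_inner_smul_left]
      rw [le_div_iff₀ hμ]
      have := h z q hq
      have hinv : μ⁻¹ * μ = 1 := inv_mul_cancel₀ hμ.ne'
      have hexp : (μ⁻¹ * inner ℝ s z - q) * μ = (μ⁻¹ * μ) * inner ℝ s z - q * μ := by ring
      rw [hinv] at hexp
      have := h z q hq
      rw [hexp]
      nlinarith
  have h2 : (μ : EReal) * econj φ (μ⁻¹ • s) ≤ ((c - τ * μ : ℝ) : EReal) := by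
    calc (μ : EReal) * econj φ (μ⁻¹ • s) ≤ (μ : EReal) * (((c - τ * μ) / μ : ℝ) : EReal) :=
          mul_le_mul_of_nonneg_left h1 (by exact_mod_cast hμ.le)
      _ = ((c - τ * μ : ℝ) : EReal) := by
          rw [← EReal.coe_mul, mul_div_cancel₀ _ hμ.ne']
  calc ((τ * μ : ℝ) : EReal) + (μ : EReal) * econj φ (μ⁻¹ • s)
      ≤ ((τ * μ : ℝ) : EReal) + ((c - τ * μ : ℝ) : EReal) := add_le_add_right h2 _
    _ = (c : EReal) := by rw [← EReal.coe_add]; ring_nf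

lemma Q_ge_pos {s xb : En n} {μ τ rx : ℝ} (hμ : 0 < μ) (hxb : φ xb = (rx : EReal))
    (hrx : rx ≤ τ) :
    ((inner ℝ s xb : ℝ) : EReal) ≤ ((τ * μ : ℝ) : EReal) + epersp (econj φ) (s, μ) := by
  rw [epersp_pos hμ]
  have h1 : ((μ⁻¹ * inner ℝ s xb - rx : ℝ) : EReal) ≤ econj φ (μ⁻¹ • s) := by
    have := le_econj (μ⁻¹ • s) xb hxb
    rwa [real_inner_smul_left] at this
  have h2 : ((inner ℝ s xb - μ * rx : ℝ) : EReal) ≤ (μ : EReal) * econj φ (μ⁻¹ • s) := by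
    calc ((inner ℝ s xb - μ * rx : ℝ) : EReal)
        = (μ : EReal) * ((μ⁻¹ * inner ℝ s xb - rx : ℝ) : EReal) := by
          rw [← EReal.coe_mul]
          norm_cast
          field_simp
      _ ≤ (μ : EReal) * econj φ (μ⁻¹ • s) :=
          mul_le_mul_of_nonneg_left h1 (by exact_mod_cast hμ.le)
  calc ((inner ℝ s xb : ℝ) : EReal) ≤ ((τ * μ + (inner ℝ s xb - μ * rx) : ℝ) : EReal) := by
        rw [EReal.coe_le_coe_iff]; nlinarith
    _ = ((τ * μ : ℝ) : EReal) + ((inner ℝ s xb - μ * rx : ℝ) : EReal) := EReal.coe_add _ _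
    _ ≤ _ := add_le_add_right h2 _


lemma real_case_a {Iz σ p u δ ε zd : ℝ} (hδ : 0 < δ) (hu : 0 < u)
    (h1 : u / (u + δ) * zd + δ / (u + δ) * Iz ≤ σ)
    (h2 : -(p + δ * ε / u) < zd) :
    Iz ≤ σ + (p + σ) / δ * u + ε := by
  have huδ : 0 < u + δ := by linarith
  have e1 : (u / (u + δ) * zd + δ / (u + δ) * Iz) * (u + δ) = u * zd + δ * Iz := by
    field_simp
  have h1' : u * zd + δ * Iz ≤ σ * (u + δ) := by
    have := mul_le_mul_of_nonneg_right h1 huδ.le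
    rw [e1] at this; linarith
  have e2 : δ * ε / u * u = δ * ε := by field_simp
  have h3 : δ * Iz ≤ σ * (u + δ) + u * p + δ * ε := by nlinarith
  have e3 : (p + σ) / δ * u * δ = (p + σ) * u := by field_simp
  have goal' : Iz * δ ≤ (σ + (p + σ) / δ * u + ε) * δ := by nlinarith [e3]
  exact le_of_mul_le_mul_right goal' hδ

lemma real_case_c {Iz σ p τ q δ : ℝ} (hδ : 0 < δ) (hqd : δ < τ - q)
    (h1 : δ / (τ - q) * Iz + (1 - δ / (τ - q)) * σ ≤ -p) :
    Iz + (p + σ) / δ * (τ - q) ≤ σ := by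
  have hτq : 0 < τ - q := by linarith
  have e1 : (δ / (τ - q) * Iz + (1 - δ / (τ - q)) * σ) * (τ - q) =
      δ * Iz + (τ - q) * σ - δ * σ := by field_simp; ring
  have h1' : δ * Iz + (τ - q) * σ - δ * σ ≤ -p * (τ - q) := by
    have := mul_le_mul_of_nonneg_right h1 hτq.le
    rw [e1] at this; linarith
  have e2 : (p + σ) / δ * (τ - q) * δ = (p + σ) * (τ - q) := by field_simp
  have goal' : (Iz + (p + σ) / δ * (τ - q)) * δ ≤ σ * δ := by nlinarith [e2]
  exact le_of_mul_le_mul_right goal' hδ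

lemma lag_bound (hconvex : IsConvexFn φ) {sbar xbar : En n} {τ δ p σ rx : ℝ} (hδ : 0 < δ)
    (hrx : φ xbar = (rx : EReal)) (hrxτ : rx ≤ τ)
    (hσ : (inner ℝ sbar xbar : ℝ) = σ) (hpσ : 0 ≤ p + σ)
    (hlev : ∀ z, φ z ≤ (τ : EReal) → (inner ℝ sbar z : ℝ) ≤ σ)
    (hple : ∀ z, φ z ≤ ((τ - δ : ℝ) : EReal) → p ≤ -(inner ℝ sbar z : ℝ))
    (hinf : ∀ ε : ℝ, 0 < ε → ∃ z, φ z ≤ ((τ - δ : ℝ) : EReal) ∧ -(inner ℝ sbar z : ℝ) < p + ε) :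
    ∀ z : En n, ∀ q : ℝ, φ z = (q : EReal) →
      (inner ℝ sbar z : ℝ) + (p + σ) / δ * (τ - q) ≤ σ + (p + σ) := by
  intro z q hzq
  have hμδ : 0 ≤ (p + σ) / δ := div_nonneg hpσ hδ.le
  rcases lt_or_ge τ q with hq | hq
  · -- q > τ
    obtain ⟨u, rfl⟩ : ∃ u, q = u + τ := ⟨q - τ, by ring⟩
    have hu : 0 < u := by linarith
    have huδ : 0 < u + δ := by linarith
    have hsz : (inner ℝ sbar z : ℝ) ≤ σ + (p + σ) / δ * u := by
      by_contra hcon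
      push_neg at hcon
      obtain ⟨ε, hε, hεdef⟩ : ∃ ε : ℝ, 0 < ε ∧
          (inner ℝ sbar z : ℝ) = σ + (p + σ) / δ * u + 2 * ε :=
        ⟨((inner ℝ sbar z : ℝ) - (σ + (p + σ) / δ * u)) / 2, by linarith, by ring⟩
      obtain ⟨zδ, hzδ1, hzδ2⟩ := hinf (δ * ε / u) (by positivity)
      have hlam0 : (0:ℝ) ≤ u / (u + δ) := by positivity
      have hlam1 : 1 - u / (u + δ) = δ / (u + δ) := by field_simp; ring
      have hz' : φ ((u / (u + δ)) • zδ + (1 - u / (u + δ)) • z) ≤ (τ : EReal) := by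
        refine (cvx_ineq hconvex hzδ1 hzq.le hlam0 (by rw [hlam1]; positivity)
          (by ring)).trans ?_
        rw [EReal.coe_le_coe_iff, hlam1]
        have : u / (u + δ) * (τ - δ) + δ / (u + δ) * (u + τ) = τ := by
          field_simp; ring
        linarith [this.le]
      have h1 := hlev _ hz'
      rw [inner_add_right, real_inner_smul_right, real_inner_smul_right, hlam1] at h1
      have h2 : -(p + δ * ε / u) < (inner ℝ sbar zδ : ℝ) := by linarith
      have := real_case_a hδ hu h1 h2
      linarith
    nlinarith
  · rcases le_or_gt (τ - q) δ with hqd | hqd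
    · have h1 : (inner ℝ sbar z : ℝ) ≤ σ := hlev z (by rw [hzq]; exact_mod_cast hq)
      have e : (p + σ) / δ * δ = p + σ := div_mul_cancel₀ _ hδ.ne'
      nlinarith [mul_le_mul_of_nonneg_left hqd hμδ]
    · have hτq : 0 < τ - q := by linarith
      have hlam0 : (0:ℝ) < δ / (τ - q) := by positivity
      have hlam1 : δ / (τ - q) < 1 := (div_lt_one hτq).2 hqd
      have hz' : φ ((δ / (τ - q)) • z + (1 - δ / (τ - q)) • xbar) ≤ ((τ - δ : ℝ) : EReal) := by
        refine (cvx_ineq hconvex hzq.le hrx.le hlam0.le (by linarith) (by ring)).trans ?_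
        rw [EReal.coe_le_coe_iff]
        have e : δ / (τ - q) * q + (1 - δ / (τ - q)) * τ = τ - δ := by
          field_simp; ring
        nlinarith [mul_le_mul_of_nonneg_left hrxτ (by linarith : (0:ℝ) ≤ 1 - δ / (τ - q))]
      have h1 := hple _ hz'
      rw [inner_add_right, real_inner_smul_right, real_inner_smul_right, hσ] at h1
      have h2 : δ / (τ - q) * (inner ℝ sbar z : ℝ) + (1 - δ / (τ - q)) * σ ≤ -p := by linarith
      have h3 := real_case_c hδ hqd h2
      linarith

lemma strong_dual (hclosed : LowerSemicontinuous φ) (hproper : IsProperFn φ)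
    (hconvex : IsConvexFn φ) {τ : ℝ} (hτ : (⨅ x, φ x) < (τ : EReal))
    {xbar sbar : En n} (hx : φ xbar ≤ (τ : EReal))
    (hlev : ∀ z, φ z ≤ (τ : EReal) → (inner ℝ sbar z : ℝ) ≤ (inner ℝ sbar xbar : ℝ)) :
    (⨅ μ : ℝ, ⨅ _ : 0 ≤ μ, ((τ * μ : ℝ) : EReal) + epersp (econj φ) (sbar, μ)) ≤
      ((inner ℝ sbar xbar : ℝ) : EReal) := by
  obtain ⟨σ, hσ⟩ : ∃ v : ℝ, (inner ℝ sbar xbar : ℝ) = v := ⟨_, rfl⟩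
  rw [hσ]
  have hlev' : ∀ z, φ z ≤ (τ : EReal) → (inner ℝ sbar z : ℝ) ≤ σ := by
    intro z hz; rw [← hσ]; exact hlev z hz
  obtain ⟨xh, hxh⟩ := iInf_lt_iff.1 hτ
  have hxhne : φ xh ≠ ⊤ := fun h => by rw [h] at hxh; exact (not_top_lt hxh)
  obtain ⟨rh, hrh⟩ := real_of_dom hproper hxhne
  have hrhτ : rh < τ := by rwa [hrh, EReal.coe_lt_coe_iff] at hxh
  have hxbarne : φ xbar ≠ ⊤ :=
    fun h => by rw [h] at hx; exact (EReal.coe_ne_top τ) (top_le_iff.1 hx)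
  obtain ⟨rx, hrx⟩ := real_of_dom hproper hxbarne
  have hrxτ : rx ≤ τ := by rwa [hrx, EReal.coe_le_coe_iff] at hx
  obtain ⟨sh, hsh⟩ : ∃ v : ℝ, (inner ℝ sbar xh : ℝ) = v := ⟨_, rfl⟩
  have hshσ : sh ≤ σ := by
    rw [← hsh]; exact hlev' xh (by rw [hrh]; exact_mod_cast hrhτ.le)
  obtain ⟨K, hKdef⟩ : ∃ v : ℝ, (σ - sh) / (τ - rh) = v := ⟨_, rfl⟩
  have hK : 0 ≤ K := by rw [← hKdef]; exact div_nonneg (by linarith) (by linarith)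
  have main : ∀ δ : ℝ, 0 < δ → δ ≤ τ - rh →
      (⨅ μ : ℝ, ⨅ _ : 0 ≤ μ, ((τ * μ : ℝ) : EReal) + epersp (econj φ) (sbar, μ)) ≤
        ((σ + δ * K : ℝ) : EReal) := by
    intro δ hδ hδd
    obtain ⟨p, hpσ, hple, hinf⟩ : ∃ p : ℝ, -σ ≤ p ∧
        (∀ z : En n, φ z ≤ ((τ - δ : ℝ) : EReal) → p ≤ -(inner ℝ sbar z : ℝ)) ∧
        (∀ ε : ℝ, 0 < ε →
          ∃ z : En n, φ z ≤ ((τ - δ : ℝ) : EReal) ∧ -(inner ℝ sbar z : ℝ) < p + ε) := by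
      have hTne : {t : ℝ | ∃ z : En n, φ z ≤ ((τ - δ : ℝ) : EReal) ∧
          t = -(inner ℝ sbar z : ℝ)}.Nonempty := by
        refine ⟨-(inner ℝ sbar xh : ℝ), xh, ?_, rfl⟩
        rw [hrh, EReal.coe_le_coe_iff]; linarith
      have hTbdd : BddBelow {t : ℝ | ∃ z : En n, φ z ≤ ((τ - δ : ℝ) : EReal) ∧
          t = -(inner ℝ sbar z : ℝ)} := by
        refine ⟨-σ, fun t ht => ?_⟩
        obtain ⟨z, hz1, hz2⟩ := ht
        have := hlev' z (hz1.trans (by rw [EReal.coe_le_coe_iff]; linarith))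
        rw [hz2]; linarith
      refine ⟨sInf _, le_csInf hTne (fun t ht => ?_), fun z hz => csInf_le hTbdd ⟨z, hz, rfl⟩,
        fun ε hε => ?_⟩
      · obtain ⟨z, hz1, hz2⟩ := ht
        have := hlev' z (hz1.trans (by rw [EReal.coe_le_coe_iff]; linarith))
        rw [hz2]; linarith
      · obtain ⟨t, htT, htlt⟩ := Real.lt_sInf_add_pos hTne hε
        obtain ⟨z, hz1, hz2⟩ := htT
        exact ⟨z, hz1, by rw [← hz2]; exact htlt⟩
    have hpσ' : 0 ≤ p + σ := by linarith
    have hLag := lag_bound hconvex hδ hrx hrxτ hσ hpσ' hlev' hple hinf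
    have hmub : p + σ ≤ δ * K := by
      have hlam0 : (0:ℝ) < δ / (τ - rh) := div_pos hδ (by linarith)
      have hlam1 : δ / (τ - rh) ≤ 1 := (div_le_one (by linarith)).2 hδd
      have e' : δ / (τ - rh) * τ - δ / (τ - rh) * rh = δ := by
        have h := div_mul_cancel₀ δ (show (τ - rh) ≠ 0 by linarith)
        nlinarith [h]
      have hz' : φ ((δ / (τ - rh)) • xh + (1 - δ / (τ - rh)) • xbar) ≤
          ((τ - δ : ℝ) : EReal) := by
        refine (cvx_ineq hconvex hrh.le hrx.le hlam0.le (by linarith) (by ring)).trans ?_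
        rw [EReal.coe_le_coe_iff]
        have hbound := mul_le_mul_of_nonneg_left hrxτ
          (by linarith : (0:ℝ) ≤ 1 - δ / (τ - rh))
        have E1 : (1 - δ / (τ - rh)) * τ = τ - δ / (τ - rh) * τ := by ring
        linarith
      have h1 := hple _ hz'
      rw [inner_add_right, real_inner_smul_right, real_inner_smul_right, hsh, hσ] at h1
      have e2 : δ / (τ - rh) * σ - δ / (τ - rh) * sh = δ * K := by
        rw [← hKdef]
        field_simp
      linarith
    rcases eq_or_lt_of_le hpσ' with hp0 | hppos
    · -- zero multiplier
      refine le_trans (iInf₂_le 0 le_rfl) ?_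
      have h0 : ((τ * 0 : ℝ) : EReal) = (0 : EReal) := by norm_num
      rw [h0, zero_add, epersp_zero]
      refine le_trans (ehorizon_le hproper hrx (c := σ) ?_) ?_
      · intro z hz
        obtain ⟨q, hq⟩ := real_of_dom hproper hz
        have := hLag z q hq
        rw [← hp0] at this
        simpa using this
      · rw [EReal.coe_le_coe_iff]; nlinarith
    · -- positive multiplier
      have hμpos : 0 < (p + σ) / δ := div_pos hppos hδ
      refine le_trans (iInf₂_le ((p + σ) / δ) hμpos.le) ?_
      refine Q_le_of_forall hμpos hproper ?_
      intro z q hzq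
      have := hLag z q hzq
      linarith
  by_contra hcon
  push_neg at hcon
  obtain ⟨m, h1, h2⟩ := EReal.lt_iff_exists_real_btwn.1 hcon
  have hm : σ < m := by exact_mod_cast h1
  have hδpos : 0 < min (τ - rh) ((m - σ) / (K + 1)) :=
    lt_min (by linarith) (div_pos (by linarith) (by linarith))
  have hmain := main _ hδpos (min_le_left _ _)
  have hδ2 : min (τ - rh) ((m - σ) / (K + 1)) ≤ (m - σ) / (K + 1) := min_le_right _ _
  have hδ3 : min (τ - rh) ((m - σ) / (K + 1)) * (K + 1) ≤ m - σ :=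
    (le_div_iff₀ (by linarith : (0:ℝ) < K + 1)).1 hδ2
  have e : min (τ - rh) ((m - σ) / (K + 1)) * (K + 1) =
      min (τ - rh) ((m - σ) / (K + 1)) * K + min (τ - rh) ((m - σ) / (K + 1)) := by ring
  have hfin : σ + min (τ - rh) ((m - σ) / (K + 1)) * K < m := by
    rw [e] at hδ3; linarith
  have := hmain.trans_lt (EReal.coe_lt_coe_iff.2 hfin)
  exact lt_irrefl _ (this.trans h2)

lemma esupp_eq {τ : ℝ} {xbar sbar : En n} (hx : φ xbar ≤ (τ : EReal))
    (hcone : ∀ y, φ y ≤ (τ : EReal) → (inner ℝ sbar (y - xbar) : ℝ) ≤ 0) :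
    esupp {x | φ x ≤ (τ : EReal)} sbar = ((inner ℝ sbar xbar : ℝ) : EReal) := by
  refine le_antisymm (iSup₂_le fun z hz => ?_) ?_
  · rw [EReal.coe_le_coe_iff]
    have := hcone z hz
    rw [inner_sub_right] at this
    linarith
  · exact le_iSup₂ (f := fun x (_ : φ x ≤ (τ : EReal)) => ((inner ℝ sbar x : ℝ) : EReal)) xbar hx

lemma weak_dual (hclosed : LowerSemicontinuous φ) (hproper : IsProperFn φ)
    (hconvex : IsConvexFn φ) {τ rx : ℝ} {xbar : En n} (hrx : φ xbar = (rx : EReal))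
    (hrxτ : rx ≤ τ) (sbar : En n) :
    ∀ μ : ℝ, 0 ≤ μ → ((inner ℝ sbar xbar : ℝ) : EReal) ≤
      ((τ * μ : ℝ) : EReal) + epersp (econj φ) (sbar, μ) := by
  intro μ hμ
  rcases eq_or_lt_of_le hμ with h0 | hpos
  · obtain ⟨a, ha⟩ := exists_dom_econj hclosed hproper hconvex
    rw [← h0]
    have h1 : ((τ * 0 : ℝ) : EReal) = (0 : EReal) := by norm_num
    rw [h1, zero_add, epersp_zero]
    exact ehorizon_ge hproper ha hrx sbar
  · exact Q_ge_pos hpos hrx hrxτ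

lemma S2_le (hproper : IsProperFn φ) {τ rx : ℝ} {xbar sbar : En n}
    (hrx : φ xbar = (rx : EReal)) (hrxτ : rx ≤ τ) {μ : ℝ} (hμ : 0 ≤ μ)
    (hmem : sbar ∈ muPlusSubdiff μ φ xbar)
    (hslack : (μ : EReal) * (φ xbar - (τ : EReal)) = 0) :
    ((τ * μ : ℝ) : EReal) + epersp (econj φ) (sbar, μ) ≤
      ((inner ℝ sbar xbar : ℝ) : EReal) := by
  rcases eq_or_lt_of_le hμ with h0 | hpos
  · rw [muPlusSubdiff, if_neg (by rw [← h0]; exact lt_irrefl 0)] at hmem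
    obtain ⟨hxd, hcone⟩ := hmem
    rw [← h0]
    have h1 : ((τ * 0 : ℝ) : EReal) = (0 : EReal) := by norm_num
    rw [h1, zero_add, epersp_zero]
    refine ehorizon_le hproper hrx fun z hz => ?_
    have := hcone z hz
    rw [inner_sub_right] at this
    linarith
  · rw [muPlusSubdiff, if_pos hpos] at hmem
    obtain ⟨v, hv, hμv⟩ := hmem
    -- complementary slackness gives rx = τ
    have hrxτ' : rx = τ := by
      rw [hrx] at hslack
      rw [← EReal.coe_sub, ← EReal.coe_mul] at hslack
      have : μ * (rx - τ) = 0 := by exact_mod_cast hslack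
      rcases mul_eq_zero.1 this with h | h
      · exact absurd h hpos.ne'
      · linarith
    refine Q_le_of_forall hpos hproper fun z q hzq => ?_
    have hsub := hv z
    rw [hrx, hzq] at hsub
    have hsub' : rx + (inner ℝ v (z - xbar) : ℝ) ≤ q := by
      rw [← EReal.coe_add] at hsub; exact_mod_cast hsub
    rw [inner_sub_right] at hsub'
    have hinz : (inner ℝ sbar z : ℝ) = μ * (inner ℝ v z : ℝ) := by
      rw [← hμv, real_inner_smul_left]
    have hinx : (inner ℝ sbar xbar : ℝ) = μ * (inner ℝ v xbar : ℝ) := by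
      rw [← hμv, real_inner_smul_left]
    rw [hinz, hinx]
    nlinarith [mul_le_mul_of_nonneg_left hsub' hμ]

lemma S1_sub (hclosed : LowerSemicontinuous φ) (hproper : IsProperFn φ)
    (hconvex : IsConvexFn φ) {τ rx : ℝ} {xbar sbar : En n}
    (hrx : φ xbar = (rx : EReal)) (hrxτ : rx ≤ τ) {μ : ℝ} (hμ : 0 ≤ μ)
    (hQ : ((τ * μ : ℝ) : EReal) + epersp (econj φ) (sbar, μ) =
      ((inner ℝ sbar xbar : ℝ) : EReal)) :
    sbar ∈ muPlusSubdiff μ φ xbar ∧ (μ : EReal) * (φ xbar - (τ : EReal)) = 0 := by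
  rcases eq_or_lt_of_le hμ with h0 | hpos
  · rw [← h0] at hQ ⊢
    have h1 : ((τ * 0 : ℝ) : EReal) = (0 : EReal) := by norm_num
    rw [h1, zero_add, epersp_zero] at hQ
    constructor
    · rw [muPlusSubdiff, if_neg (lt_irrefl 0)]
      refine ⟨by simp [Set.mem_setOf_eq, hrx], fun y hy => ?_⟩
      obtain ⟨ρ, hρ⟩ := real_of_dom hproper hy
      have := ehorizon_ge hproper
        (exists_dom_econj hclosed hproper hconvex).choose_spec hρ sbar
      rw [hQ, EReal.coe_le_coe_iff] at this
      rw [inner_sub_right]; linarith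
    · simp
  · rw [epersp_pos hpos] at hQ
    have hEbot : econj φ (μ⁻¹ • sbar) ≠ ⊥ := econj_ne_bot hrx _
    have hEtop : econj φ (μ⁻¹ • sbar) ≠ ⊤ := by
      intro h
      rw [h, EReal.coe_mul_top_of_pos hpos, EReal.coe_add_top] at hQ
      exact (EReal.coe_ne_top _) hQ.symm
    obtain ⟨W, hW⟩ := real_of_econj hproper hrx hEtop
    rw [hW, ← EReal.coe_mul, ← EReal.coe_add] at hQ
    have hval : τ * μ + μ * W = (inner ℝ sbar xbar : ℝ) := by exact_mod_cast hQ
    have hvx : (inner ℝ (μ⁻¹ • sbar) xbar : ℝ) = μ⁻¹ * (inner ℝ sbar xbar : ℝ) :=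
      real_inner_smul_left _ _ _
    have h1 : (inner ℝ (μ⁻¹ • sbar) xbar : ℝ) - rx ≤ W := by
      have := le_econj (μ⁻¹ • sbar) xbar hrx
      rw [hW, EReal.coe_le_coe_iff] at this
      exact this
    have ecancel : μ * (μ⁻¹ * (inner ℝ sbar xbar : ℝ)) = (inner ℝ sbar xbar : ℝ) := by
      field_simp
    have hτrx : τ ≤ rx := by
      rw [hvx] at h1
      nlinarith [mul_le_mul_of_nonneg_left h1 hμ]
    have hrxeq : rx = τ := le_antisymm hrxτ hτrx
    constructor
    · rw [muPlusSubdiff, if_pos hpos]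
      refine ⟨μ⁻¹ • sbar, fun y => ?_, smul_inv_smul₀ hpos.ne' sbar⟩
      by_cases hy : φ y = ⊤
      · rw [hy]; exact le_top
      · obtain ⟨q, hq⟩ := real_of_dom hproper hy
        rw [hrx, hq, ← EReal.coe_add, EReal.coe_le_coe_iff]
        have h2 : (inner ℝ (μ⁻¹ • sbar) y : ℝ) - q ≤ W := by
          have := le_econj (μ⁻¹ • sbar) y hq
          rw [hW, EReal.coe_le_coe_iff] at this
          exact this
        rw [inner_sub_right, hvx]
        have hginv : μ * (rx + ((inner ℝ (μ⁻¹ • sbar) y : ℝ) - μ⁻¹ * (inner ℝ sbar xbar : ℝ)))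
            ≤ μ * q := by
          nlinarith [mul_le_mul_of_nonneg_left h2 hμ]
        exact le_of_mul_le_mul_left hginv hpos
    · rw [hrx, hrxeq, ← EReal.coe_sub]
      norm_num

/-- Lemma on multipliers: under the stated assumptions, if either set
`S₁` or `S₂` is nonempty then `S₁ = S₂`, and the support function of the level set
equals `inf_{μ ≥ 0} [τμ + (φ*)^π(s̄, μ)]`. -/
theorem stmt5 {n : ℕ} (φ : En n → EReal)
    (hclosed : LowerSemicontinuous φ) (hproper : IsProperFn φ) (hconvex : IsConvexFn φ)
    (τ : ℝ) (hτ : (⨅ x, φ x) < (τ : EReal))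
    (xbar : En n) (hx : φ xbar ≤ (τ : EReal))
    (sbar : En n) (hs : sbar ∈ enormalCone {x | φ x ≤ (τ : EReal)} xbar)
    (S₁ S₂ : Set ℝ)
    (hS₁ : S₁ = {μ : ℝ | 0 ≤ μ ∧
      (((τ * μ : ℝ)) : EReal) + epersp (econj φ) (sbar, μ) =
        ⨅ μ' : ℝ, ⨅ _ : 0 ≤ μ', (((τ * μ' : ℝ)) : EReal) + epersp (econj φ) (sbar, μ')})
    (hS₂ : S₂ = {μ : ℝ | 0 ≤ μ ∧ sbar ∈ muPlusSubdiff μ φ xbar ∧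
      (μ : EReal) * (φ xbar - (τ : EReal)) = 0})
    (hne : S₁.Nonempty ∨ S₂.Nonempty) :
    S₁ = S₂ ∧
    esupp {x | φ x ≤ (τ : EReal)} sbar =
      ⨅ μ : ℝ, ⨅ _ : 0 ≤ μ, (((τ * μ : ℝ)) : EReal) + epersp (econj φ) (sbar, μ) := by
  obtain ⟨hxmem, hcone⟩ := hs
  have hxbarne : φ xbar ≠ ⊤ :=
    fun h => by rw [h] at hx; exact (EReal.coe_ne_top τ) (top_le_iff.1 hx)
  obtain ⟨rx, hrx⟩ := real_of_dom hproper hxbarne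
  have hrxτ : rx ≤ τ := by rwa [hrx, EReal.coe_le_coe_iff] at hx
  have hlev : ∀ z, φ z ≤ (τ : EReal) → (inner ℝ sbar z : ℝ) ≤ (inner ℝ sbar xbar : ℝ) := by
    intro z hz
    have := hcone z hz
    rw [inner_sub_right] at this
    linarith
  have hIeq : (⨅ μ : ℝ, ⨅ _ : 0 ≤ μ, (((τ * μ : ℝ)) : EReal) + epersp (econj φ) (sbar, μ)) =
      ((inner ℝ sbar xbar : ℝ) : EReal) := by
    refine le_antisymm (strong_dual hclosed hproper hconvex hτ hx hlev) ?_
    exact le_iInf₂ fun μ hμ => weak_dual hclosed hproper hconvex hrx hrxτ sbar μ hμ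
  constructor
  · ext μ
    rw [hS₁, hS₂, Set.mem_setOf_eq, Set.mem_setOf_eq]
    constructor
    · rintro ⟨hμ0, hQeq⟩
      rw [hIeq] at hQeq
      obtain ⟨hmem, hslack⟩ := S1_sub hclosed hproper hconvex hrx hrxτ hμ0 hQeq
      exact ⟨hμ0, hmem, hslack⟩
    · rintro ⟨hμ0, hmem, hslack⟩
      refine ⟨hμ0, ?_⟩
      rw [hIeq]
      refine le_antisymm (S2_le hproper hrx hrxτ hμ0 hmem hslack) ?_
      have := iInf₂_le (f := fun (μ' : ℝ) (_ : 0 ≤ μ') =>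
        (((τ * μ' : ℝ)) : EReal) + epersp (econj φ) (sbar, μ')) μ hμ0
      rw [hIeq] at this
      exact this
  · rw [hIeq]
    exact esupp_eq hx hcone
end
end

section
/- Let φ : ℝⁿ → ℝ∪{+∞} be closed, proper, convex. For any s ∈ ℝⁿ and τ ∈ ℝ, σ_{lev(φ,τ)}(s) ≤ inf_{μ ≥ 0} [τμ + (φ*)^π(s, μ)]. -/
open scoped Pointwise
noncomputable section

/-- The epigraph of a lower semicontinuous `EReal`-valued function is closed. -/
lemma isClosed_epi {n : ℕ} (φ : En n → EReal) (hclosed : LowerSemicontinuous φ) :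
    IsClosed {p : En n × ℝ | φ p.1 ≤ (p.2 : EReal)} := by
  rw [← isOpen_compl_iff, isOpen_iff_mem_nhds]
  rintro ⟨x, t⟩ hp
  simp only [Set.mem_compl_iff, Set.mem_setOf_eq, not_le] at hp
  obtain ⟨r, hr1, hr2⟩ := EReal.exists_between_coe_real hp
  obtain ⟨U, hU, hU2⟩ := (hclosed x (r : EReal) hr2).exists_mem
  refine Filter.mem_of_superset (prod_mem_nhds hU
    (Iio_mem_nhds (EReal.coe_lt_coe_iff.1 hr1))) ?_
  rintro ⟨z, t'⟩ ⟨hz, ht'⟩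
  simp only [Set.mem_compl_iff, Set.mem_setOf_eq, not_le]
  exact lt_trans (EReal.coe_lt_coe_iff.2 ht') (hU2 z hz)

/-- Existence of a point where the conjugate is finite (affine minorant). -/
lemma exists_econj_ne_top {n : ℕ} (φ : En n → EReal) (hclosed : LowerSemicontinuous φ)
    (hproper : IsProperFn φ) (hconvex : IsConvexFn φ) :
    ∃ y : En n, econj φ y ≠ ⊤ := by
  obtain ⟨x₀, hx₀⟩ := hproper.1
  have hx₀b := hproper.2 x₀
  set a₀ := (φ x₀).toReal with ha₀
  have hx₀a : φ x₀ = (a₀ : EReal) := (EReal.coe_toReal hx₀ hx₀b).symm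
  have hE := isClosed_epi φ hclosed
  have hpnot : ((x₀, a₀ - 1) : En n × ℝ) ∉ {p : En n × ℝ | φ p.1 ≤ (p.2 : EReal)} := by
    simp only [Set.mem_setOf_eq, not_le, hx₀a]
    exact_mod_cast sub_one_lt a₀
  obtain ⟨f, u, hfu, hub⟩ := geometric_hahn_banach_point_closed hconvex hE hpnot
  have hf : ∀ (z : En n) (t : ℝ), f (z, t) = f (z, 0) + t * f (0, 1) := by
    intro z t
    have h1 : ((z, t) : En n × ℝ) = (z, (0:ℝ)) + t • ((0 : En n), (1:ℝ)) := by
      simp [Prod.ext_iff]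
    rw [h1, map_add, map_smul, smul_eq_mul]
  set c := f ((0 : En n), (1:ℝ)) with hc
  set g : En n → ℝ := fun z => f (z, 0) with hg
  have hmem : ∀ (z : En n) (t : ℝ), φ z ≤ (t : EReal) → u < g z + t * c := by
    intro z t ht
    have := hub (z, t) ht
    rwa [hf z t] at this
  have hcnonneg : 0 ≤ c := by
    by_contra hcn
    push_neg at hcn
    set t := max a₀ ((u - g x₀) / c + 1) with htdef
    have h1 : u < g x₀ + t * c := hmem x₀ t (by
      rw [hx₀a]; exact EReal.coe_le_coe_iff.2 (le_max_left _ _))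
    have h2 : (u - g x₀) / c + 1 ≤ t := le_max_right _ _
    -- since c < 0, t * c ≤ ((u - g x₀)/c + 1) * c = u - g x₀ + c
    have h3 : t * c ≤ ((u - g x₀) / c + 1) * c :=
      mul_le_mul_of_nonpos_right h2 hcn.le
    have h4 : ((u - g x₀) / c + 1) * c = (u - g x₀) + c := by
      rw [add_mul, div_mul_cancel₀ _ (ne_of_lt hcn), one_mul]
    nlinarith
  have hcpos : 0 < c := by
    rcases lt_or_eq_of_le hcnonneg with h | h
    · exact h
    · exfalso
      have h1 : u < g x₀ + a₀ * c := hmem x₀ a₀ (by rw [hx₀a])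
      have h2 : f (x₀, a₀ - 1) = g x₀ + (a₀ - 1) * c := hf x₀ (a₀ - 1)
      rw [h2] at hfu
      nlinarith
  -- affine minorant : φ z ≥ (u - g z)/c
  have hmin : ∀ z : En n, φ z ≠ ⊤ → ((u - g z) / c : ℝ) ≤ (φ z).toReal := by
    intro z hz
    have hzb := hproper.2 z
    have hza : φ z = ((φ z).toReal : EReal) := (EReal.coe_toReal hz hzb).symm
    have h1 : u < g z + (φ z).toReal * c := hmem z (φ z).toReal (by rw [← hza])
    rw [div_le_iff₀ hcpos]
    nlinarith
  set G : En n →L[ℝ] ℝ := f.comp (ContinuousLinearMap.inl ℝ (En n) ℝ) with hG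
  refine ⟨(InnerProductSpace.toDual ℝ (En n)).symm ((-(c⁻¹)) • G), ?_⟩
  set y := (InnerProductSpace.toDual ℝ (En n)).symm ((-(c⁻¹)) • G) with hy
  have hinner : ∀ z : En n, (inner ℝ y z : ℝ) = -(c⁻¹) * g z := by
    intro z
    rw [hy, InnerProductSpace.toDual_symm_apply]
    simp [hG, hg]
  have hbound : econj φ y ≤ ((-(u / c) : ℝ) : EReal) := by
    refine iSup_le fun z => ?_
    by_cases hz : φ z = ⊤
    · rw [hz, EReal.sub_top]
      exact bot_le
    · have hzb := hproper.2 z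
      have hza : φ z = ((φ z).toReal : EReal) := (EReal.coe_toReal hz hzb).symm
      rw [hza, ← EReal.coe_sub, EReal.coe_le_coe_iff, hinner z]
      have h2 := hmin z hz
      rw [div_le_iff₀ hcpos] at h2
      have h3 : -(c⁻¹) * g z - (φ z).toReal ≤ -(c⁻¹) * g z - (u - g z) / c := by
        have := hmin z hz; linarith
      refine h3.trans (le_of_eq ?_)
      field_simp
      ring
  exact fun h => (EReal.coe_lt_top _).not_ge (h ▸ hbound)

/-- The horizon function of the conjugate dominates `⟨s, x⟩` for `x ∈ dom φ`. -/
lemma horizon_lower {n : ℕ} (φ : En n → EReal) (hbot : ∀ x, φ x ≠ ⊥)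
    {y₀ : En n} (hy₀ : econj φ y₀ ≠ ⊤) {x : En n} {a : ℝ} (hxa : φ x = (a : EReal))
    (s : En n) : ((inner ℝ s x : ℝ) : EReal) ≤ ehorizon (econj φ) s := by
  set h := econj φ with hh
  have hlow : ∀ y : En n, ((inner ℝ y x - a : ℝ) : EReal) ≤ h y := by
    intro y
    have := le_iSup (fun z => (((inner ℝ y z : ℝ)) : EReal) - φ z) x
    rwa [hxa, ← EReal.coe_sub] at this
  have hnbot : ∀ y : En n, h y ≠ ⊥ := fun y =>
    ne_of_gt (lt_of_lt_of_le (EReal.bot_lt_coe _) (hlow y))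
  by_contra hcon
  push_neg at hcon
  obtain ⟨M, hM1, hM2⟩ := EReal.lt_iff_exists_real_btwn.1 hcon
  have hM2' : M < inner ℝ s x := EReal.coe_lt_coe_iff.1 hM2
  set b := (h y₀).toReal with hb
  have hy₀a : h y₀ = (b : EReal) := (EReal.coe_toReal hy₀ (hnbot y₀)).symm
  have hstep : ∀ y : En n, h y ≠ ⊤ → h (y + s) ≤ (M : EReal) + h y := by
    intro y hy
    have h1 : h (y + s) - h y ≤ ehorizon h s :=
      le_iSup₂ (f := fun z (_ : z ∈ {z : En n | h z ≠ ⊤}) => h (z + s) - h z) y hy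
    have h2 : h (y + s) - h y ≤ (M : EReal) := h1.trans hM1.le
    rwa [EReal.sub_le_iff_le_add (Or.inl (hnbot y)) (Or.inl hy)] at h2
  have hind : ∀ k : ℕ, h (y₀ + (k : ℝ) • s) ≤ ((b + k * M : ℝ) : EReal) := by
    intro k
    induction k with
    | zero => simpa [hy₀a.symm] using le_of_eq (by rw [hy₀a]; norm_num)
    | succ k ih =>
      have hyne : h (y₀ + (k : ℝ) • s) ≠ ⊤ :=
        ne_top_of_le_ne_top (EReal.coe_ne_top _) ih
      have h1 := hstep _ hyne
      have h2 : (M : EReal) + h (y₀ + (k : ℝ) • s) ≤ (M : EReal) + ((b + k * M : ℝ) : EReal) :=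
        add_le_add_right ih _
      have h3 : y₀ + (k : ℝ) • s + s = y₀ + ((k + 1 : ℕ) : ℝ) • s := by
        push_cast
        rw [add_smul, one_smul, add_assoc]
      rw [h3] at h1
      refine (h1.trans h2).trans (le_of_eq ?_)
      rw [← EReal.coe_add, EReal.coe_eq_coe_iff]
      push_cast
      ring
  have hfin : ∀ k : ℕ, inner ℝ y₀ x + k * inner ℝ s x - a ≤ b + k * M := by
    intro k
    have h1 := (hlow (y₀ + (k : ℝ) • s)).trans (hind k)
    rw [EReal.coe_le_coe_iff] at h1
    have h2 : (inner ℝ (y₀ + (k : ℝ) • s) x : ℝ) = inner ℝ y₀ x + k * inner ℝ s x := by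
      rw [inner_add_left, real_inner_smul_left]
    rw [h2] at h1
    linarith
  obtain ⟨k, hk⟩ := exists_nat_gt ((b + a - inner ℝ y₀ x) / (inner ℝ s x - M))
  have hk2 := hfin k
  have hpos : (0:ℝ) < inner ℝ s x - M := by linarith
  rw [div_lt_iff₀ hpos] at hk
  nlinarith

/-- `σ_{lev(φ,τ)}(s) ≤ inf_{μ ≥ 0} [τμ + (φ*)^π(s, μ)]`. -/
theorem stmt6 {n : ℕ} (φ : En n → EReal)
    (hclosed : LowerSemicontinuous φ) (hproper : IsProperFn φ) (hconvex : IsConvexFn φ)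
    (s : En n) (τ : ℝ) :
    esupp {x | φ x ≤ (τ : EReal)} s ≤
      ⨅ μ : ℝ, ⨅ _ : 0 ≤ μ, (((τ * μ : ℝ)) : EReal) + epersp (econj φ) (s, μ) := by
  obtain ⟨y₀, hy₀⟩ := exists_econj_ne_top φ hclosed hproper hconvex
  refine le_iInf fun μ => le_iInf fun hμ => ?_
  refine iSup₂_le fun x hx => ?_
  have hxt : φ x ≠ ⊤ := ne_top_of_le_ne_top (EReal.coe_ne_top τ) hx
  have hxb := hproper.2 x
  set a := (φ x).toReal with ha
  have hxa : φ x = (a : EReal) := (EReal.coe_toReal hxt hxb).symm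
  have hx' : φ x ≤ (τ : EReal) := hx
  have haτ : a ≤ τ := by rw [hxa] at hx'; exact EReal.coe_le_coe_iff.1 hx'
  rcases hμ.lt_or_eq with hμ0 | hμ0
  · -- μ > 0
    have hne : μ ≠ 0 := ne_of_gt hμ0
    unfold epersp
    simp only [if_pos hμ0]
    have h1 : ((inner ℝ ((μ⁻¹:ℝ) • s) x : ℝ) : EReal) - φ x ≤ econj φ ((μ⁻¹:ℝ) • s) :=
      le_iSup (fun z => (((inner ℝ ((μ⁻¹:ℝ) • s) z : ℝ)) : EReal) - φ z) x
    rw [hxa, ← EReal.coe_sub] at h1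
    have h2 : ((μ : ℝ) : EReal) * ((inner ℝ ((μ⁻¹:ℝ) • s) x - a : ℝ) : EReal) ≤
        ((μ : ℝ) : EReal) * econj φ ((μ⁻¹:ℝ) • s) :=
      mul_le_mul_of_nonneg_left h1 (by exact_mod_cast hμ)
    rw [← EReal.coe_mul] at h2
    refine le_trans ?_ (add_le_add_right h2 _)
    rw [← EReal.coe_add, EReal.coe_le_coe_iff]
    have hinv : (inner ℝ ((μ⁻¹:ℝ) • s) x : ℝ) = μ⁻¹ * inner ℝ s x := real_inner_smul_left ..
    rw [hinv]
    have h5 : μ * (μ⁻¹ * inner ℝ s x - a) = inner ℝ s x - μ * a := by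
      field_simp
    have h6 : μ * a ≤ τ * μ := by nlinarith
    rw [h5]
    linarith
  · -- μ = 0
    subst hμ0
    rw [mul_zero]
    have hp : epersp (econj φ) (s, (0:ℝ)) = ehorizon (econj φ) s := by
      unfold epersp
      norm_num
    rw [hp, EReal.coe_zero, zero_add]
    exact horizon_lower φ hproper.2 hy₀ hxa s
end
end

section
/- Let U ⊂ ℝⁿ be nonempty closed convex with 0 ∈ U, B ∈ ℝ^{n×n} symmetric positive semidefinite, and φ(x) = sup_{w ∈ U} [⟨x,w⟩ − ½⟨w, Bw⟩]. Then φ(x) = inf_s [½‖s‖₂² + γ(x − Ls | U°)], where B = LLᵀ with L ∈ ℝ^{n×k} of rank k = rank B, and γ(·|U°) is the gauge of the polar set of U. -/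
open scoped Pointwise
noncomputable section

/-- Extended-real-valued gauge (Minkowski functional) of a set. -/
def egaugeFn {n : ℕ} (U : Set (En n)) (x : En n) : EReal :=
  sInf {r : EReal | ∃ lam : ℝ, 0 ≤ lam ∧ x ∈ lam • U ∧ r = (lam : EReal)}

/-- Polar set. -/
def epolarSet {n : ℕ} (U : Set (En n)) : Set (En n) :=
  {v | ∀ u ∈ U, (inner ℝ v u : ℝ) ≤ 1}

/-- Quadratic support function `φ(x) = sup_{w ∈ U} [⟨x,w⟩ − ½⟨w,Bw⟩]`. -/
def qsFn {n : ℕ} (U : Set (En n)) (B : En n →L[ℝ] En n) (x : En n) : EReal :=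
  ⨆ w ∈ U, (((inner ℝ x w : ℝ) - (1 / 2) * (inner ℝ w (B w) : ℝ) : ℝ) : EReal)

/-- The gauge of the polar set dominates inner products against members of `U`. -/
lemma egauge_polar_ge_inner {n : ℕ} (U : Set (En n)) (y : En n) {w : En n} (hw : w ∈ U) :
    ((inner ℝ y w : ℝ) : EReal) ≤ egaugeFn (epolarSet U) y := by
  apply le_sInf
  rintro r ⟨lam, hlam, hy, rfl⟩
  rw [Set.mem_smul_set] at hy
  obtain ⟨v, hv, rfl⟩ := hy
  rw [EReal.coe_le_coe_iff, real_inner_smul_left]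
  calc lam * (inner ℝ v w : ℝ) ≤ lam * 1 := by
        exact mul_le_mul_of_nonneg_left (hv w hw) hlam
    _ = lam := mul_one lam

/-- Upper bound for the gauge of the polar set from a uniform inner product bound. -/
lemma egauge_polar_le {n : ℕ} (U : Set (En n)) (y : En n) {c : ℝ} (hc : 0 ≤ c)
    (h : ∀ w ∈ U, (inner ℝ y w : ℝ) ≤ c) :
    egaugeFn (epolarSet U) y ≤ (c : EReal) := by
  have key : ∀ c' : ℝ, c < c' → egaugeFn (epolarSet U) y ≤ (c' : EReal) := by
    intro c' hc'
    have hc'pos : 0 < c' := lt_of_le_of_lt hc hc'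
    apply sInf_le
    refine ⟨c', hc'pos.le, ?_, rfl⟩
    rw [Set.mem_smul_set]
    refine ⟨c'⁻¹ • y, ?_, smul_inv_smul₀ hc'pos.ne' y⟩
    intro u hu
    rw [real_inner_smul_left]
    calc c'⁻¹ * (inner ℝ y u : ℝ) ≤ c'⁻¹ * c := by
          exact mul_le_mul_of_nonneg_left (h u hu) (inv_nonneg.mpr hc'pos.le)
      _ ≤ 1 := by rw [inv_mul_le_iff₀ hc'pos]; linarith
  by_contra hlt
  push_neg at hlt
  obtain ⟨r, hr1, hr2⟩ := EReal.exists_between_coe_real hlt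
  exact absurd (key r (by exact_mod_cast hr1)) (not_le.mpr hr2)

/-- Variational inequality at a maximizer of `w ↦ ⟨x,w⟩ - ½‖T w‖²` over a convex set. -/
lemma key_vi {n k : ℕ} {W : Set (En n)} (hW : Convex ℝ W) (x : En n) (T : En n →L[ℝ] En k)
    {ws : En n} (hws : ws ∈ W)
    (hmax : ∀ u ∈ W, (inner ℝ x u : ℝ) - (1 / 2) * ‖T u‖ ^ 2 ≤
      (inner ℝ x ws : ℝ) - (1 / 2) * ‖T ws‖ ^ 2)
    {w : En n} (hw : w ∈ W) :
    (inner ℝ x (w - ws) : ℝ) - (inner ℝ (T ws) (T (w - ws)) : ℝ) ≤ 0 := by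
  set d : En n := w - ws with hd
  set A : ℝ := (inner ℝ x d : ℝ) - (inner ℝ (T ws) (T d) : ℝ) with hA
  have key : ∀ t : ℝ, 0 < t → t ≤ 1 → A ≤ t / 2 * ‖T d‖ ^ 2 := by
    intro t ht0 ht1
    have hmem : ws + t • d ∈ W := by
      have h2 : (1 - t) • ws + t • w ∈ W :=
        hW hws hw (by linarith) ht0.le (by ring)
      have : (1 - t) • ws + t • w = ws + t • d := by
        rw [hd]; module
      rwa [this] at h2
    have h3 := hmax _ hmem
    have e1 : (inner ℝ x (ws + t • d) : ℝ) = (inner ℝ x ws : ℝ) + t * (inner ℝ x d : ℝ) := by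
      rw [inner_add_right, real_inner_smul_right]
    have e2 : ‖T (ws + t • d)‖ ^ 2
        = ‖T ws‖ ^ 2 + 2 * (t * (inner ℝ (T ws) (T d) : ℝ)) + t ^ 2 * ‖T d‖ ^ 2 := by
      rw [map_add, map_smul, norm_add_sq_real, real_inner_smul_right, norm_smul,
        Real.norm_eq_abs, mul_pow, sq_abs]
    rw [e1, e2] at h3
    rw [hA]
    nlinarith [h3, ht0]
  by_contra hcon
  push_neg at hcon
  have hb : (0:ℝ) ≤ ‖T d‖ ^ 2 := sq_nonneg _
  set t : ℝ := min 1 (A / (‖T d‖ ^ 2 + 1)) with ht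
  have ht0 : 0 < t := lt_min one_pos (div_pos hcon (by positivity))
  have h1 := key t ht0 (min_le_left _ _)
  have h2 : t ≤ A / (‖T d‖ ^ 2 + 1) := min_le_right _ _
  have h3 : t * (‖T d‖ ^ 2 + 1) ≤ A := by
    rw [← le_div_iff₀ (by positivity)]; exact h2
  nlinarith [h1, h3, ht0, hb]

/-- with `B = L Lᵀ` (`L` of full column rank),
`φ(x) = inf_s [½‖s‖² + γ(x − Ls | U°)]`. -/
theorem stmt13 {n k : ℕ} (U : Set (En n))
    (hUne : U.Nonempty) (hUcl : IsClosed U) (hUcv : Convex ℝ U) (hU0 : (0 : En n) ∈ U)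
    (B : En n →L[ℝ] En n)
    (hsymm : ∀ x y : En n, (inner ℝ (B x) y : ℝ) = (inner ℝ x (B y) : ℝ))
    (hpsd : ∀ x : En n, 0 ≤ (inner ℝ x (B x) : ℝ))
    (L : En k →L[ℝ] En n)
    (hL : ∀ w : En n, B w = L (ContinuousLinearMap.adjoint L w))
    (hLinj : Function.Injective L) :
    ∀ x : En n,
      qsFn U B x =
        ⨅ s : En k,
          ((((1 / 2) * ‖s‖ ^ 2 : ℝ)) : EReal) + egaugeFn (epolarSet U) (x - L s) := by
  intro x
  set T : En n →L[ℝ] En k := ContinuousLinearMap.adjoint L with hT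
  have hLT : ∀ (u : En k) (d : En n), (inner ℝ (L u) d : ℝ) = (inner ℝ u (T d) : ℝ) := by
    intro u d
    rw [hT, ContinuousLinearMap.adjoint_inner_right]
  have hBq : ∀ w : En n, (inner ℝ w (B w) : ℝ) = ‖T w‖ ^ 2 := by
    intro w
    rw [hL w, real_inner_comm, hLT, real_inner_self_eq_norm_sq]
  set f : En n → ℝ := fun w => (inner ℝ x w : ℝ) - (1 / 2) * ‖T w‖ ^ 2 with hf
  have hqs : qsFn U B x = ⨆ w ∈ U, ((f w : ℝ) : EReal) := by
    unfold qsFn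
    congr 1; ext w; congr 1; ext hw
    rw [hf]; simp only [hBq]
  rw [hqs]
  apply le_antisymm
  · -- easy direction
    refine iSup₂_le fun w hw => le_iInf fun s => ?_
    have hreal : f w ≤ (1 / 2) * ‖s‖ ^ 2 + (inner ℝ (x - L s) w : ℝ) := by
      have h1 : (inner ℝ (x - L s) w : ℝ) = (inner ℝ x w : ℝ) - (inner ℝ s (T w) : ℝ) := by
        rw [inner_sub_left, hLT]
      have h2 : (inner ℝ s (T w) : ℝ) ≤ ‖s‖ * ‖T w‖ := real_inner_le_norm s (T w)
      have h3 : ‖s‖ * ‖T w‖ ≤ (1 / 2) * ‖s‖ ^ 2 + (1 / 2) * ‖T w‖ ^ 2 := by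
        nlinarith [sq_nonneg (‖s‖ - ‖T w‖)]
      rw [hf, h1]; dsimp only; linarith
    calc ((f w : ℝ) : EReal)
        ≤ (((1 / 2) * ‖s‖ ^ 2 : ℝ) : EReal) + ((inner ℝ (x - L s) w : ℝ) : EReal) := by
          rw [← EReal.coe_add]; exact_mod_cast hreal
      _ ≤ (((1 / 2) * ‖s‖ ^ 2 : ℝ) : EReal) + egaugeFn (epolarSet U) (x - L s) :=
          add_le_add_right (egauge_polar_ge_inner U _ hw) _
  · -- hard direction
    set α : EReal := ⨆ w ∈ U, ((f w : ℝ) : EReal) with hα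
    by_cases htop : α = ⊤
    · rw [htop]; exact le_top
    have hα0 : (0 : EReal) ≤ α := by
      have h0 : ((f 0 : ℝ) : EReal) ≤ α := le_iSup₂ (f := fun w _ => ((f w : ℝ) : EReal)) 0 hU0
      have : f 0 = 0 := by rw [hf]; simp
      rwa [this, EReal.coe_zero] at h0
    set a : ℝ := α.toReal with ha
    have hbot : α ≠ ⊥ := by
      intro hb; rw [hb] at hα0; exact absurd hα0 (by simp)
    have hαa : ((a : ℝ) : EReal) = α := EReal.coe_toReal htop hbot
    have ha0 : (0 : ℝ) ≤ a := by
      rw [← EReal.coe_le_coe_iff]; rw [hαa]; exact_mod_cast hα0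
    have hub : ∀ w ∈ U, f w ≤ a := by
      intro w hw
      have h1 : ((f w : ℝ) : EReal) ≤ α := le_iSup₂ (f := fun w _ => ((f w : ℝ) : EReal)) w hw
      rw [← hαa, EReal.coe_le_coe_iff] at h1; exact h1
    -- compact truncations
    set Wr : ℕ → Set (En n) := fun r => U ∩ Metric.closedBall 0 r with hWr
    have hWrcv : ∀ r, Convex ℝ (Wr r) := fun r => hUcv.inter (convex_closedBall 0 r)
    have hWrcp : ∀ r, IsCompact (Wr r) :=
      fun r => (isCompact_closedBall (0 : En n) r).inter_left hUcl
    have hWr0 : ∀ r, (0 : En n) ∈ Wr r := by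
      intro r
      exact ⟨hU0, Metric.mem_closedBall_self (by positivity)⟩
    have hfc : Continuous f := by
      rw [hf]
      exact (continuous_const.inner continuous_id).sub
        (continuous_const.mul ((T.continuous.norm).pow 2))
    have hex : ∀ r : ℕ, ∃ ws ∈ Wr r, ∀ u ∈ Wr r, f u ≤ f ws := by
      intro r
      obtain ⟨ws, hws, hmax⟩ :=
        (hWrcp r).exists_isMaxOn ⟨0, hWr0 r⟩ hfc.continuousOn
      exact ⟨ws, hws, fun u hu => hmax hu⟩
    choose ws hwsmem hwsmax using hex
    set s : ℕ → En k := fun r => T (ws r) with hs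
    -- key estimate from the variational inequality
    have hP : ∀ r : ℕ, ∀ w ∈ Wr r,
        (inner ℝ (x - L (s r)) w : ℝ) ≤ a - (1 / 2) * ‖s r‖ ^ 2 := by
      intro r w hw
      have hvi := key_vi (hWrcv r) x T (hwsmem r) (hwsmax r) hw
      have h1 : (inner ℝ (T (ws r)) (T (w - ws r)) : ℝ)
          = (inner ℝ (L (s r)) (w - ws r) : ℝ) := by rw [hLT]
      have h2 : (inner ℝ (x - L (s r)) (w - ws r) : ℝ) ≤ 0 := by
        rw [inner_sub_left]; rw [h1] at hvi; linarith
      have h3 : (inner ℝ (x - L (s r)) w : ℝ) ≤ (inner ℝ (x - L (s r)) (ws r) : ℝ) := by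
        rw [inner_sub_right] at h2; linarith
      have h4 : (inner ℝ (x - L (s r)) (ws r) : ℝ)
          = (inner ℝ x (ws r) : ℝ) - ‖s r‖ ^ 2 := by
        rw [inner_sub_left, hLT, ← real_inner_self_eq_norm_sq]
      have h5 : f (ws r) ≤ a := hub _ (hwsmem r).1
      have h6 : (inner ℝ x (ws r) : ℝ) - (1 / 2) * ‖s r‖ ^ 2 ≤ a := h5
      linarith [h3, h4.le, h4.ge, h6]
    have hbound : ∀ r : ℕ, (1 / 2) * ‖s r‖ ^ 2 ≤ a := by
      intro r
      have := hP r 0 (hWr0 r)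
      simpa using this
    -- convergent subsequence
    set R : ℝ := Real.sqrt (2 * a) with hR
    have hsball : ∀ r : ℕ, s r ∈ Metric.closedBall (0 : En k) R := by
      intro r
      rw [mem_closedBall_zero_iff, hR]
      rw [Real.le_sqrt (norm_nonneg _) (by linarith)]
      linarith [hbound r]
    obtain ⟨sbar, _, φ, hφ, hconv⟩ :=
      (isCompact_closedBall (0 : En k) R).tendsto_subseq hsball
    -- the limit of the estimates
    have hfin : ∀ w ∈ U, (inner ℝ (x - L sbar) w : ℝ) ≤ a - (1 / 2) * ‖sbar‖ ^ 2 := by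
      intro w hw
      have hev : ∀ᶠ j in Filter.atTop,
          (inner ℝ (x - L (s (φ j))) w : ℝ) ≤ a - (1 / 2) * ‖s (φ j)‖ ^ 2 := by
        rw [Filter.eventually_atTop]
        refine ⟨⌈‖w‖⌉₊, fun j hj => ?_⟩
        refine hP (φ j) w ⟨hw, ?_⟩
        rw [mem_closedBall_zero_iff]
        calc ‖w‖ ≤ (⌈‖w‖⌉₊ : ℝ) := Nat.le_ceil _
          _ ≤ (j : ℝ) := by exact_mod_cast hj
          _ ≤ (φ j : ℝ) := by exact_mod_cast hφ.le_apply
      have hg1 : Continuous (fun u : En k => (inner ℝ (x - L u) w : ℝ)) :=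
        (continuous_const.sub L.continuous).inner continuous_const
      have hg2 : Continuous (fun u : En k => a - (1 / 2) * ‖u‖ ^ 2) := by fun_prop
      exact le_of_tendsto_of_tendsto
        ((hg1.tendsto sbar).comp hconv) ((hg2.tendsto sbar).comp hconv) hev
    have hc0 : (0 : ℝ) ≤ a - (1 / 2) * ‖sbar‖ ^ 2 := by
      have := hfin 0 hU0
      simpa using this
    have hγ : egaugeFn (epolarSet U) (x - L sbar) ≤ ((a - (1 / 2) * ‖sbar‖ ^ 2 : ℝ) : EReal) :=
      egauge_polar_le U _ hc0 hfin
    calc (⨅ s' : En k, ((((1 / 2) * ‖s'‖ ^ 2 : ℝ)) : EReal)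
          + egaugeFn (epolarSet U) (x - L s'))
        ≤ (((1 / 2) * ‖sbar‖ ^ 2 : ℝ) : EReal) + egaugeFn (epolarSet U) (x - L sbar) :=
          iInf_le _ sbar
      _ ≤ (((1 / 2) * ‖sbar‖ ^ 2 : ℝ) : EReal)
            + ((a - (1 / 2) * ‖sbar‖ ^ 2 : ℝ) : EReal) := add_le_add_right hγ _
      _ = ((a : ℝ) : EReal) := by rw [← EReal.coe_add]; norm_num
      _ = α := hαa
end
end

section
/- Let φ(x) = sup_{w ∈ U} [⟨x,w⟩ − ½⟨w,Bw⟩] with U ⊂ ℝⁿ nonempty closed convex containing 0 and B positive semidefinite, and let τ > 0. Then the support function of lev(φ,τ) is given by: σ_{lev(φ,τ)}(w) = τγ(w|U) + ‖w‖_B²/(2γ(w|U)) if γ(w|U) > ‖w‖_B/√(2τ), and σ_{lev(φ,τ)}(w) = √(2τ)‖w‖_B if γ(w|U) ≤ ‖w‖_B/√(2τ), where ‖w‖_B = √(⟨w, Bw⟩). Moreover the infimum inf_{λ≥0}[τλ + (φ*)^π(w,λ)] is attained at λ = max{γ(w|U), ‖w‖_B/√(2τ)}. -/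
open scoped Pointwise
noncomputable section

section Aux

variable {n : ℕ} {U : Set (En n)} {B : En n →L[ℝ] En n} {w : En n}

lemma qsFn_le_iff {x : En n} {c : ℝ} :
    qsFn U B x ≤ (c : EReal) ↔ ∀ u ∈ U, (inner ℝ x u : ℝ) - (1 / 2) * (inner ℝ u (B u) : ℝ) ≤ c := by
  rw [qsFn, iSup₂_le_iff]
  exact forall₂_congr fun u hu => EReal.coe_le_coe_iff

lemma qsFn_ge {x u : En n} (hu : u ∈ U) :
    (((inner ℝ x u : ℝ) - (1 / 2) * (inner ℝ u (B u) : ℝ) : ℝ) : EReal) ≤ qsFn U B x :=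
  le_iSup₂ (f := fun u (_ : u ∈ U) =>
    (((inner ℝ x u : ℝ) - (1 / 2) * (inner ℝ u (B u) : ℝ) : ℝ) : EReal)) u hu

lemma qsFn_nonneg (hU0 : (0 : En n) ∈ U) {x : En n} : (0 : EReal) ≤ qsFn U B x := by
  have := qsFn_ge (B := B) (x := x) hU0
  simpa using this

lemma key_ineq (hsymm : ∀ x y : En n, (inner ℝ (B x) y : ℝ) = (inner ℝ x (B y) : ℝ))
    (hpsd : ∀ x : En n, 0 ≤ (inner ℝ x (B x) : ℝ)) (a : ℝ) (v u' : En n) :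
    a * (inner ℝ (B v) u' : ℝ) - (1 / 2) * (inner ℝ u' (B u') : ℝ) ≤ a^2/2 * (inner ℝ v (B v) : ℝ) := by
  have h := hpsd (a • v - u')
  have hexp : (inner ℝ (a • v - u') (B (a • v - u')) : ℝ)
      = a^2 * (inner ℝ v (B v) : ℝ) - 2*a*(inner ℝ (B v) u' : ℝ) + (inner ℝ u' (B u') : ℝ) := by
    simp only [map_sub, map_smul, inner_sub_left, inner_sub_right, real_inner_smul_left,
      real_inner_smul_right]
    rw [← hsymm v u', real_inner_comm u' (B v)]
    ring
  nlinarith [h, hexp]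

open Classical in
/-- The conjugate of the quadratic support function. -/
lemma econj_qs (hUcl : IsClosed U) (hUcv : Convex ℝ U) (hU0 : (0 : En n) ∈ U)
    (hsymm : ∀ x y : En n, (inner ℝ (B x) y : ℝ) = (inner ℝ x (B y) : ℝ))
    (hpsd : ∀ x : En n, 0 ≤ (inner ℝ x (B x) : ℝ)) (y : En n) :
    econj (qsFn U B) y =
      if y ∈ U then (((1 / 2) * (inner ℝ y (B y) : ℝ) : ℝ) : EReal) else ⊤ := by
  by_cases hy : y ∈ U
  · rw [if_pos hy]
    apply le_antisymm
    · apply iSup_le fun x => ?_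
      have h1 : (((inner ℝ x y : ℝ) - (1 / 2) * (inner ℝ y (B y) : ℝ) : ℝ) : EReal) ≤ qsFn U B x :=
        qsFn_ge hy
      calc ((inner ℝ y x : ℝ) : EReal) - qsFn U B x
          ≤ ((inner ℝ y x : ℝ) : EReal) - (((inner ℝ x y : ℝ) - (1 / 2) * (inner ℝ y (B y) : ℝ) : ℝ) : EReal) :=
            EReal.sub_le_sub le_rfl h1
        _ = (((1 / 2) * (inner ℝ y (B y) : ℝ) : ℝ) : EReal) := by
            rw [← EReal.coe_sub, EReal.coe_eq_coe_iff, real_inner_comm y x]; ring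
    · have hval : qsFn U B (B y) = (((1 / 2) * (inner ℝ y (B y) : ℝ) : ℝ) : EReal) := by
        apply le_antisymm
        · rw [qsFn_le_iff]
          intro u hu
          have := key_ineq hsymm hpsd 1 y u
          simpa using this
        · have := qsFn_ge (B := B) (x := B y) hy
          calc (((1 / 2) * (inner ℝ y (B y) : ℝ) : ℝ) : EReal)
              = (((inner ℝ (B y) y : ℝ) - (1 / 2) * (inner ℝ y (B y) : ℝ) : ℝ) : EReal) := by
                rw [EReal.coe_eq_coe_iff, real_inner_comm (B y) y]; ring
            _ ≤ _ := this
      calc (((1 / 2) * (inner ℝ y (B y) : ℝ) : ℝ) : EReal)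
          = ((inner ℝ y (B y) : ℝ) : EReal) - qsFn U B (B y) := by
            rw [hval, ← EReal.coe_sub, EReal.coe_eq_coe_iff]; ring
        _ ≤ econj (qsFn U B) y := le_iSup (fun x => ((inner ℝ y x : ℝ) : EReal) - qsFn U B x) (B y)
  · rw [if_neg hy]
    obtain ⟨f, c, hfU, hfy⟩ := geometric_hahn_banach_closed_point hUcv hUcl hy
    obtain ⟨z, hz⟩ : ∃ v : En n, ∀ x, f x = (inner ℝ v x : ℝ) := by
      refine ⟨(InnerProductSpace.toDual ℝ _).symm f, fun x => ?_⟩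
      rw [← InnerProductSpace.toDual_apply_apply, (InnerProductSpace.toDual ℝ _).apply_symm_apply]
    rw [eq_top_iff, ← (econj (qsFn U B) y).eq_top_iff_forall_lt.mpr]
    intro M
    have hfyc : 0 < f y - c := by linarith
    set t : ℝ := max 0 ((M + 1) / (f y - c)) with ht
    have ht0 : 0 ≤ t := le_max_left _ _
    have hq : qsFn U B (t • z) ≤ ((t * c : ℝ) : EReal) := by
      rw [qsFn_le_iff]
      intro u hu
      have h1 : (inner ℝ z u : ℝ) ≤ c := by rw [← hz]; exact (hfU u hu).le
      have h2 : (inner ℝ (t • z) u : ℝ) = t * (inner ℝ z u : ℝ) := real_inner_smul_left _ _ _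
      nlinarith [hpsd u, mul_le_mul_of_nonneg_left h1 ht0]
    have hterm : ((t * (f y - c) : ℝ) : EReal) ≤ ((inner ℝ y (t • z) : ℝ) : EReal) - qsFn U B (t • z) := by
      have h3 : (inner ℝ y (t • z) : ℝ) = t * (f y) - t * c + t * c := by
        rw [real_inner_smul_right, real_inner_comm, ← hz]; ring
      calc ((t * (f y - c) : ℝ) : EReal)
          = (((inner ℝ y (t • z) : ℝ) - t * c : ℝ) : EReal) := by
            rw [EReal.coe_eq_coe_iff, h3]; ring
        _ = ((inner ℝ y (t • z) : ℝ) : EReal) - ((t * c : ℝ) : EReal) := EReal.coe_sub _ _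
        _ ≤ _ := EReal.sub_le_sub le_rfl hq
    have hM : M < t * (f y - c) := by
      have : (M + 1) / (f y - c) ≤ t := le_max_right _ _
      have := mul_le_mul_of_nonneg_right this hfyc.le
      rw [div_mul_cancel₀ _ hfyc.ne'] at this
      linarith
    calc (M : EReal) < ((t * (f y - c) : ℝ) : EReal) := EReal.coe_lt_coe_iff.mpr hM
      _ ≤ ((inner ℝ y (t • z) : ℝ) : EReal) - qsFn U B (t • z) := hterm
      _ ≤ econj (qsFn U B) y := le_iSup (fun x => ((inner ℝ y x : ℝ) : EReal) - qsFn U B x) (t • z)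
end Aux

section Gauge

variable {n : ℕ} {U : Set (En n)} {w : En n}

/-- the set of admissible scalars -/
def gset (U : Set (En n)) (w : En n) : Set ℝ := {lam : ℝ | 0 ≤ lam ∧ w ∈ lam • U}

lemma gset_bddBelow : BddBelow (gset U w) := ⟨0, fun _ hl => hl.1⟩

lemma gset_inf_nonneg (h : (gset U w).Nonempty) : 0 ≤ sInf (gset U w) :=
  le_csInf h fun _ hl => hl.1

lemma gaugeNE_eq_top (h : ¬ (gset U w).Nonempty) : egaugeFn U w = ⊤ := by
  rw [egaugeFn]
  rw [show {r : EReal | ∃ lam : ℝ, 0 ≤ lam ∧ w ∈ lam • U ∧ r = (lam : EReal)} = ∅ from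
    Set.eq_empty_iff_forall_notMem.mpr ?_, sInf_empty]
  rintro r ⟨lam, h0, hmem, rfl⟩
  exact h ⟨lam, h0, hmem⟩

lemma gauge_eq_coe (h : (gset U w).Nonempty) :
    egaugeFn U w = ((sInf (gset U w) : ℝ) : EReal) := by
  apply le_antisymm
  · rw [← EReal.le_of_forall_lt_iff_le]
    intro z hz
    obtain ⟨l, hl, hlz⟩ := (csInf_lt_iff gset_bddBelow h).mp (EReal.coe_lt_coe_iff.mp hz)
    exact le_trans (sInf_le ⟨l, hl.1, hl.2, rfl⟩) (EReal.coe_le_coe_iff.mpr hlz.le)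
  · apply le_sInf
    rintro r ⟨lam, h0, hmem, rfl⟩
    exact EReal.coe_le_coe_iff.mpr (csInf_le gset_bddBelow ⟨h0, hmem⟩)

lemma egaugeFn_nonneg : (0 : EReal) ≤ egaugeFn U w := by
  apply le_sInf
  rintro r ⟨lam, h0, _, rfl⟩
  exact_mod_cast h0

lemma gset_upward (hUcv : Convex ℝ U) (hU0 : (0 : En n) ∈ U) {l l' : ℝ}
    (hl : l ∈ gset U w) (hle : l ≤ l') : l' ∈ gset U w := by
  have h0' : 0 ≤ l' := le_trans hl.1 hle
  rcases eq_or_lt_of_le h0' with h | h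
  · have h2 : l = 0 := le_antisymm (hle.trans h.symm.le) hl.1
    have h3 : l' = l := by rw [h2, ← h]
    rwa [h3]
  · obtain ⟨u, hu, huw⟩ := hl.2
    refine ⟨h0', ⟨(l / l') • u, ?_, ?_⟩⟩
    · exact hUcv.smul_mem_of_zero_mem hU0 hu
        ⟨div_nonneg hl.1 h0', div_le_one_of_le₀ hle h0'⟩
    · show l' • ((l / l') • u) = w
      rw [smul_smul, mul_div_cancel₀ _ h.ne']
      exact huw

lemma gset_inf_mem (hUcl : IsClosed U) (h : (gset U w).Nonempty)
    (hpos : 0 < sInf (gset U w)) : sInf (gset U w) ∈ gset U w := by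
  set γ := sInf (gset U w) with hγ
  have hseq : ∀ k : ℕ, ∃ l : ℝ, l ∈ gset U w ∧ l < γ + ((k : ℝ) + 1)⁻¹ := by
    intro k
    exact (csInf_lt_iff gset_bddBelow h).mp (lt_add_of_pos_right γ (by positivity))
  choose l hlmem hlub using hseq
  have hlb : ∀ k, γ ≤ l k := fun k => csInf_le gset_bddBelow (hlmem k)
  have hlim : Filter.Tendsto l Filter.atTop (nhds γ) := by
    apply tendsto_of_tendsto_of_tendsto_of_le_of_le (g := fun _ => γ)
      (h := fun k : ℕ => γ + ((k : ℝ) + 1)⁻¹) tendsto_const_nhds ?_ hlb (fun k => (hlub k).le)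
    have h2 : Filter.Tendsto (fun k : ℕ => ((k : ℝ) + 1)⁻¹) Filter.atTop (nhds 0) :=
      tendsto_one_div_add_atTop_nhds_zero_nat.congr (by simp [one_div])
    simpa using tendsto_const_nhds.add h2
  have hlpos : ∀ k, 0 < l k := fun k => lt_of_lt_of_le hpos (hlb k)
  have hmemU : ∀ k, (l k)⁻¹ • w ∈ U := by
    intro k
    exact (Set.mem_smul_set_iff_inv_smul_mem₀ (hlpos k).ne' _ _).mp (hlmem k).2
  have hmem : γ⁻¹ • w ∈ U :=
    hUcl.mem_of_tendsto ((hlim.inv₀ hpos.ne').smul_const w)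
      (Filter.Eventually.of_forall hmemU)
  exact ⟨hpos.le, (Set.mem_smul_set_iff_inv_smul_mem₀ hpos.ne' _ _).mpr hmem⟩

lemma gset_zero_smul (hUcv : Convex ℝ U) (hU0 : (0 : En n) ∈ U) (hUne : U.Nonempty)
    (h : (gset U w).Nonempty) (h0 : sInf (gset U w) = 0) :
    ∀ t : ℝ, 0 ≤ t → t • w ∈ U := by
  intro t ht
  rcases eq_or_lt_of_le ht with h' | h'
  · rw [← h', zero_smul]; exact hU0
  · obtain ⟨l, hl, hlt⟩ := (csInf_lt_iff gset_bddBelow h).mp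
      (show sInf (gset U w) < t⁻¹ by rw [h0]; positivity)
    rcases eq_or_lt_of_le hl.1 with h0l | h0l
    · have hw0 : w = 0 := by
        have h2 := hl.2
        rw [← h0l, Set.zero_smul_set hUne] at h2
        simpa using h2
      rw [hw0, smul_zero]; exact hU0
    · obtain ⟨u, hu, huw⟩ := hl.2
      have huw' : l • u = w := huw
      have h3 : t • w = (t * l) • u := by rw [← huw', smul_smul]
      rw [h3]
      refine hUcv.smul_mem_of_zero_mem hU0 hu ⟨by positivity, ?_⟩
      calc t * l ≤ t * t⁻¹ := by nlinarith
        _ = 1 := mul_inv_cancel₀ h'.ne'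

lemma mem_smul_of_inf_le (hUcl : IsClosed U) (hUcv : Convex ℝ U) (hU0 : (0 : En n) ∈ U)
    (hUne : U.Nonempty) (h : (gset U w).Nonempty) {μ : ℝ} (hμ : 0 < μ)
    (hle : sInf (gset U w) ≤ μ) : w ∈ μ • U := by
  rcases eq_or_lt_of_le (gset_inf_nonneg h) with h0 | h0
  · have := gset_zero_smul hUcv hU0 hUne h h0.symm μ⁻¹ (by positivity)
    exact (Set.mem_smul_set_iff_inv_smul_mem₀ hμ.ne' _ _).mpr this
  · exact (gset_upward hUcv hU0 (gset_inf_mem hUcl h h0) hle).2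
end Gauge



section Persp
variable {n : ℕ} {U : Set (En n)} {B : En n →L[ℝ] En n} {w : En n}

lemma linear_nonneg_zero {a b : ℝ} (h : ∀ t : ℝ, 0 ≤ a + t * b) : b = 0 := by
  by_contra hb
  have := h ((-a - 1)/b)
  rw [div_mul_cancel₀ _ hb] at this
  linarith

open Classical in
lemma epersp_pos_s14 (hUcl : IsClosed U) (hUcv : Convex ℝ U) (hU0 : (0 : En n) ∈ U)
    (hsymm : ∀ x y : En n, (inner ℝ (B x) y : ℝ) = (inner ℝ x (B y) : ℝ))
    (hpsd : ∀ x : En n, 0 ≤ (inner ℝ x (B x) : ℝ)) {μ : ℝ} (hμ : 0 < μ) :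
    epersp (econj (qsFn U B)) (w, μ) =
      if w ∈ μ • U then (((inner ℝ w (B w) : ℝ) / (2 * μ) : ℝ) : EReal) else ⊤ := by
  rw [epersp, if_pos hμ]
  simp only
  rw [econj_qs hUcl hUcv hU0 hsymm hpsd]
  by_cases hw : w ∈ μ • U
  · rw [if_pos ((Set.mem_smul_set_iff_inv_smul_mem₀ hμ.ne' _ _).mp hw), if_pos hw]
    have hin : (inner ℝ (μ⁻¹ • w) (B (μ⁻¹ • w)) : ℝ) = μ⁻¹ * μ⁻¹ * (inner ℝ w (B w) : ℝ) := by
      rw [map_smul, real_inner_smul_left, real_inner_smul_right]; ring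
    rw [hin, ← EReal.coe_mul, EReal.coe_eq_coe_iff]
    field_simp
  · rw [if_neg (fun hc => hw ((Set.mem_smul_set_iff_inv_smul_mem₀ hμ.ne' _ _).mpr hc)),
      if_neg hw]
    exact EReal.coe_mul_top_of_pos hμ

lemma epersp_zero_s14 : epersp (econj (qsFn U B)) (w, 0) = ehorizon (econj (qsFn U B)) w := by
  rw [epersp]
  norm_num

open Classical in
lemma econj_dom (hUcl : IsClosed U) (hUcv : Convex ℝ U) (hU0 : (0 : En n) ∈ U)
    (hsymm : ∀ x y : En n, (inner ℝ (B x) y : ℝ) = (inner ℝ x (B y) : ℝ))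
    (hpsd : ∀ x : En n, 0 ≤ (inner ℝ x (B x) : ℝ)) :
    {x : En n | econj (qsFn U B) x ≠ ⊤} = U := by
  ext x
  simp only [Set.mem_setOf_eq, econj_qs hUcl hUcv hU0 hsymm hpsd]
  by_cases hx : x ∈ U <;> simp [hx, ← EReal.coe_mul]

lemma inner_B_add (hsymm : ∀ x y : En n, (inner ℝ (B x) y : ℝ) = (inner ℝ x (B y) : ℝ))
    (x : En n) (t : ℝ) :
    (inner ℝ (x + t • w) (B (x + t • w)) : ℝ)
      = (inner ℝ x (B x) : ℝ) + t * (2 * (inner ℝ x (B w) : ℝ)) + t^2 * (inner ℝ w (B w) : ℝ) := by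
  simp only [map_add, map_smul, inner_add_left, inner_add_right, real_inner_smul_left,
    real_inner_smul_right]
  rw [show (inner ℝ w (B x) : ℝ) = (inner ℝ x (B w) : ℝ) by
    rw [← hsymm x w]; exact real_inner_comm _ _]
  ring

lemma ehorizon_of_zero (hUcl : IsClosed U) (hUcv : Convex ℝ U) (hU0 : (0 : En n) ∈ U)
    (hsymm : ∀ x y : En n, (inner ℝ (B x) y : ℝ) = (inner ℝ x (B y) : ℝ))
    (hpsd : ∀ x : En n, 0 ≤ (inner ℝ x (B x) : ℝ))
    (htw : ∀ t : ℝ, 0 ≤ t → t • w ∈ U) (hq : (inner ℝ w (B w) : ℝ) = 0) :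
    ehorizon (econj (qsFn U B)) w = 0 := by
  have hdom := econj_dom (B := B) hUcl hUcv hU0 hsymm hpsd
  have hmemadd : ∀ x ∈ U, x + w ∈ U := by
    intro x hx
    have hseq : Filter.Tendsto (fun k : ℕ => (1 - ((k:ℝ)+1)⁻¹) • x + w) Filter.atTop
        (nhds (x + w)) := by
      have h2 : Filter.Tendsto (fun k : ℕ => ((k : ℝ) + 1)⁻¹) Filter.atTop (nhds 0) :=
        tendsto_one_div_add_atTop_nhds_zero_nat.congr (by simp [one_div])
      have h3 : Filter.Tendsto (fun k : ℕ => (1 - ((k:ℝ)+1)⁻¹)) Filter.atTop (nhds 1) := by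
        simpa using tendsto_const_nhds.sub h2
      have h4 := (h3.smul_const x).add (tendsto_const_nhds (x := w))
      simpa using h4
    apply hUcl.mem_of_tendsto hseq
    apply Filter.Eventually.of_forall
    intro k
    have hk : (0:ℝ) < ((k:ℝ)+1)⁻¹ := by positivity
    have hcomb := hUcv hx (htw (((k:ℝ)+1)) (by positivity))
      (a := 1 - ((k:ℝ)+1)⁻¹) (b := ((k:ℝ)+1)⁻¹) ?_ hk.le (by ring)
    · have heq : ((k:ℝ)+1)⁻¹ • (((k:ℝ)+1) • w) = w := by
        rw [smul_smul, inv_mul_cancel₀ (by positivity), one_smul]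
      rwa [heq] at hcomb
    · have hk1 : ((k:ℝ)+1)⁻¹ ≤ 1 := by
        rw [inv_le_one_iff₀]; right; linarith [Nat.cast_nonneg (α := ℝ) k]
      linarith
  have hBw : ∀ x : En n, (inner ℝ x (B w) : ℝ) = 0 := by
    intro x
    have hlin : ∀ t : ℝ, 0 ≤ (inner ℝ x (B x) : ℝ) + t * (2 * (inner ℝ x (B w) : ℝ)) := by
      intro t
      have h := hpsd (x + t • w)
      rw [inner_B_add hsymm, hq] at h
      linarith
    have h2 := linear_nonneg_zero hlin
    linarith
  have hterm : ∀ x ∈ U, econj (qsFn U B) (x + w) - econj (qsFn U B) x = (0 : EReal) := by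
    intro x hx
    rw [econj_qs hUcl hUcv hU0 hsymm hpsd, econj_qs hUcl hUcv hU0 hsymm hpsd,
      if_pos (hmemadd x hx), if_pos hx, ← EReal.coe_sub]
    rw [show ((x : En n) + w) = x + (1:ℝ) • w by rw [one_smul]]
    rw [inner_B_add hsymm, hq, hBw x]
    norm_num
  rw [ehorizon, hdom]
  apply le_antisymm
  · exact iSup₂_le fun x hx => (hterm x hx).le
  · have h5 := le_iSup₂ (f := fun x (_ : x ∈ U) =>
      econj (qsFn U B) (x + w) - econj (qsFn U B) x) 0 hU0
    rw [hterm 0 hU0] at h5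
    exact h5

lemma ehorizon_top (hUcl : IsClosed U) (hUcv : Convex ℝ U) (hU0 : (0 : En n) ∈ U)
    (hsymm : ∀ x y : En n, (inner ℝ (B x) y : ℝ) = (inner ℝ x (B y) : ℝ))
    (hpsd : ∀ x : En n, 0 ≤ (inner ℝ x (B x) : ℝ))
    (hcond : ¬ ((∀ t : ℝ, 0 ≤ t → t • w ∈ U) ∧ (inner ℝ w (B w) : ℝ) = 0)) :
    ehorizon (econj (qsFn U B)) w = ⊤ := by
  have hdom := econj_dom (B := B) hUcl hUcv hU0 hsymm hpsd
  rw [ehorizon, hdom]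
  by_cases hadd : ∀ x ∈ U, x + w ∈ U
  · have hnat : ∀ k : ℕ, ((k : ℝ)) • w ∈ U := by
      intro k
      induction k with
      | zero => simpa using hU0
      | succ k ih =>
          have h1 := hadd _ ih
          have : (((k+1 : ℕ) : ℝ)) • w = ((k:ℝ)) • w + w := by
            push_cast; rw [add_smul, one_smul]
          rwa [this]
    have htw : ∀ t : ℝ, 0 ≤ t → t • w ∈ U := by
      intro t ht
      obtain ⟨k, hk⟩ := exists_nat_gt t
      have hk0 : (0:ℝ) < k := lt_of_le_of_lt ht hk
      have heq : t • w = (t / k) • (((k:ℝ)) • w) := by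
        rw [smul_smul, div_mul_cancel₀ _ hk0.ne']
      rw [heq]
      exact hUcv.smul_mem_of_zero_mem hU0 (hnat k)
        ⟨by positivity, by rw [div_le_one hk0]; exact hk.le⟩
    have hq : (inner ℝ w (B w) : ℝ) ≠ 0 := fun h => hcond ⟨htw, h⟩
    have hqpos : 0 < (inner ℝ w (B w) : ℝ) := (hpsd w).lt_of_ne (Ne.symm hq)
    apply (EReal.eq_top_iff_forall_lt _).mpr
    intro M
    obtain ⟨k, hk⟩ := exists_nat_gt (M / (inner ℝ w (B w) : ℝ))
    set x := ((k:ℝ)) • w with hx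
    have hxU : x ∈ U := hnat k
    have hxwU : x + w ∈ U := hadd _ hxU
    have hval : econj (qsFn U B) (x + w) - econj (qsFn U B) x
        = ((((k:ℝ) + 1/2) * (inner ℝ w (B w) : ℝ) : ℝ) : EReal) := by
      rw [econj_qs hUcl hUcv hU0 hsymm hpsd, econj_qs hUcl hUcv hU0 hsymm hpsd,
        if_pos hxwU, if_pos hxU, ← EReal.coe_sub, EReal.coe_eq_coe_iff]
      rw [show x + w = x + (1:ℝ) • w by rw [one_smul]]
      rw [inner_B_add hsymm, hx, map_smul]
      simp only [real_inner_smul_left, real_inner_smul_right]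
      ring
    have hlt : M < ((k:ℝ) + 1/2) * (inner ℝ w (B w) : ℝ) := by
      have h2 : M < (k:ℝ) * (inner ℝ w (B w) : ℝ) := by
        rw [div_lt_iff₀ hqpos] at hk
        linarith
      nlinarith
    calc (M : EReal) < ((((k:ℝ) + 1/2) * (inner ℝ w (B w) : ℝ) : ℝ) : EReal) := by
          exact_mod_cast hlt
      _ = econj (qsFn U B) (x + w) - econj (qsFn U B) x := hval.symm
      _ ≤ _ := le_iSup₂ (f := fun x (_ : x ∈ U) =>
          econj (qsFn U B) (x + w) - econj (qsFn U B) x) x hxU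
  · push_neg at hadd
    obtain ⟨x, hxU, hxw⟩ := hadd
    apply top_le_iff.mp
    have hterm : econj (qsFn U B) (x + w) - econj (qsFn U B) x = ⊤ := by
      rw [econj_qs hUcl hUcv hU0 hsymm hpsd, econj_qs hUcl hUcv hU0 hsymm hpsd,
        if_neg hxw, if_pos hxU]
      exact rfl
    calc (⊤ : EReal) = econj (qsFn U B) (x + w) - econj (qsFn U B) x := hterm.symm
      _ ≤ _ := le_iSup₂ (f := fun x (_ : x ∈ U) =>
          econj (qsFn U B) (x + w) - econj (qsFn U B) x) x hxU
end Persp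


section Level
variable {n : ℕ} {U : Set (En n)} {B : En n →L[ℝ] En n} {w : En n} {τ : ℝ}

lemma zero_mem_lev (hU0 : (0 : En n) ∈ U) (hpsd : ∀ x : En n, 0 ≤ (inner ℝ x (B x) : ℝ))
    (hτ : 0 ≤ τ) : (0 : En n) ∈ {x : En n | qsFn U B x ≤ (τ : EReal)} := by
  rw [Set.mem_setOf_eq, qsFn_le_iff]
  intro u hu
  have := hpsd u
  rw [inner_zero_left]
  linarith

lemma esupp_lev_nonneg (hU0 : (0 : En n) ∈ U) (hpsd : ∀ x : En n, 0 ≤ (inner ℝ x (B x) : ℝ))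
    (hτ : 0 ≤ τ) : (0 : EReal) ≤ esupp {x : En n | qsFn U B x ≤ (τ : EReal)} w := by
  have h := le_iSup₂ (f := fun x (_ : x ∈ {x : En n | qsFn U B x ≤ (τ : EReal)}) =>
    ((inner ℝ w x : ℝ) : EReal)) 0 (zero_mem_lev hU0 hpsd hτ)
  refine le_trans (le_of_eq ?_) h
  simp

lemma esupp_lev_ub {μ : ℝ} (hμ : 0 < μ) (hw : w ∈ μ • U) :
    esupp {x : En n | qsFn U B x ≤ (τ : EReal)} w
      ≤ ((τ * μ + (inner ℝ w (B w) : ℝ) / (2 * μ) : ℝ) : EReal) := by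
  apply iSup₂_le
  intro x hx
  rw [EReal.coe_le_coe_iff]
  obtain ⟨u, huU, huw⟩ := hw
  have huw' : μ • u = w := huw
  have hu : u = μ⁻¹ • w := by rw [← huw', smul_smul, inv_mul_cancel₀ hμ.ne', one_smul]
  have hq : (inner ℝ u (B u) : ℝ) = μ⁻¹ * μ⁻¹ * (inner ℝ w (B w) : ℝ) := by
    rw [hu, map_smul, real_inner_smul_left, real_inner_smul_right]; ring
  have hxu := qsFn_le_iff.mp hx u huU
  have hwx : (inner ℝ w x : ℝ) = μ * (inner ℝ x u : ℝ) := by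
    rw [← huw', real_inner_smul_left, real_inner_comm]
  rw [hwx, hq] at *
  have h2 : μ * ((inner ℝ x u : ℝ)) ≤ μ * (τ + 1/2 * (μ⁻¹ * μ⁻¹ * (inner ℝ w (B w) : ℝ))) := by
    apply mul_le_mul_of_nonneg_left _ hμ.le
    linarith
  have h3 : μ * (τ + 1/2 * (μ⁻¹ * μ⁻¹ * (inner ℝ w (B w) : ℝ)))
      = τ * μ + (inner ℝ w (B w) : ℝ) / (2 * μ) := by
    field_simp
  linarith

/-- Part 2: the case `γ(w|U) ≤ ‖w‖_B / √(2τ)`. -/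
lemma esupp_lev_of_le (hUne : U.Nonempty) (hUcl : IsClosed U) (hUcv : Convex ℝ U)
    (hU0 : (0 : En n) ∈ U)
    (hsymm : ∀ x y : En n, (inner ℝ (B x) y : ℝ) = (inner ℝ x (B y) : ℝ))
    (hpsd : ∀ x : En n, 0 ≤ (inner ℝ x (B x) : ℝ)) (hτ : 0 < τ)
    (hle : egaugeFn U w ≤ (((Real.sqrt (inner ℝ w (B w) : ℝ) / Real.sqrt (2 * τ) : ℝ)) : EReal)) :
    esupp {x : En n | qsFn U B x ≤ (τ : EReal)} w =
      (((Real.sqrt (2 * τ) * Real.sqrt (inner ℝ w (B w) : ℝ) : ℝ)) : EReal) := by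
  set q : ℝ := (inner ℝ w (B w) : ℝ) with hqdef
  have hq0 : 0 ≤ q := hpsd w
  set b : ℝ := Real.sqrt q with hbdef
  set s : ℝ := Real.sqrt (2 * τ) with hsdef
  have hs : 0 < s := Real.sqrt_pos.mpr (by linarith)
  have hs2 : s ^ 2 = 2 * τ := Real.sq_sqrt (by linarith)
  have hb2 : b ^ 2 = q := Real.sq_sqrt hq0
  have hb0 : 0 ≤ b := Real.sqrt_nonneg _
  have hS : (gset U w).Nonempty := by
    by_contra h
    rw [gaugeNE_eq_top h] at hle
    exact (EReal.coe_ne_top _) (top_le_iff.mp hle)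
  rw [gauge_eq_coe hS] at hle
  set γ₀ := sInf (gset U w) with hγdef
  have hγbs : γ₀ ≤ b / s := EReal.coe_le_coe_iff.mp hle
  rcases eq_or_lt_of_le hq0 with hq | hq
  · -- q = 0
    have hb : b = 0 := by rw [hbdef, ← hq, Real.sqrt_zero]
    apply le_antisymm
    · rw [show ((s * b : ℝ) : EReal) = ((0:ℝ) : EReal) by rw [hb]; norm_num]
      rw [← EReal.le_of_forall_lt_iff_le]
      intro z hz
      have hz0 : 0 < z := by exact_mod_cast hz
      have hμ : (0:ℝ) < z / τ := by positivity
      have hwμ : w ∈ (z / τ) • U := by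
        apply mem_smul_of_inf_le hUcl hUcv hU0 hUne hS hμ
        calc γ₀ ≤ b / s := hγbs
          _ = 0 := by rw [hb]; simp
          _ ≤ z / τ := hμ.le
      calc esupp {x : En n | qsFn U B x ≤ (τ : EReal)} w
          ≤ ((τ * (z/τ) + q / (2 * (z/τ)) : ℝ) : EReal) := esupp_lev_ub hμ hwμ
        _ = (z : EReal) := by
            rw [EReal.coe_eq_coe_iff, ← hq]
            field_simp
            ring
    · calc ((s * b : ℝ) : EReal) = ((0:ℝ):EReal) := by rw [hb]; norm_num
        _ = (0 : EReal) := by norm_num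
        _ ≤ _ := esupp_lev_nonneg hU0 hpsd hτ.le
  · -- q > 0
    have hb : 0 < b := Real.sqrt_pos.mpr hq
    have hμ : (0:ℝ) < b / s := by positivity
    apply le_antisymm
    · have hwμ : w ∈ (b / s) • U := mem_smul_of_inf_le hUcl hUcv hU0 hUne hS hμ hγbs
      calc esupp {x : En n | qsFn U B x ≤ (τ : EReal)} w
          ≤ ((τ * (b/s) + q / (2 * (b/s)) : ℝ) : EReal) := esupp_lev_ub hμ hwμ
        _ = ((s * b : ℝ) : EReal) := by
            rw [EReal.coe_eq_coe_iff]
            field_simp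
            nlinarith [hs2, hb2]
    · set x : En n := (s / b) • (B w) with hxdef
      have hxC : x ∈ {x : En n | qsFn U B x ≤ (τ : EReal)} := by
        rw [Set.mem_setOf_eq, qsFn_le_iff]
        intro u' hu'
        have hk := key_ineq hsymm hpsd (s / b) w u'
        have h1 : (inner ℝ x u' : ℝ) = (s / b) * (inner ℝ (B w) u' : ℝ) := real_inner_smul_left _ _ _
        have h2 : (s / b) ^ 2 / 2 * q = τ := by
          field_simp
          nlinarith [hs2, hb2]
        rw [h1]
        linarith
      have hval : (inner ℝ w x : ℝ) = s * b := by
        rw [hxdef, real_inner_smul_right, ← hqdef]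
        field_simp
        nlinarith [hb2]
      calc ((s * b : ℝ) : EReal) = ((inner ℝ w x : ℝ) : EReal) := by rw [hval]
        _ ≤ _ := le_iSup₂ (f := fun x (_ : x ∈ {x : En n | qsFn U B x ≤ (τ : EReal)}) =>
            ((inner ℝ w x : ℝ) : EReal)) x hxC
end Level


section Part1
variable {n : ℕ} {U : Set (En n)} {B : En n →L[ℝ] En n} {w : En n} {τ : ℝ}

lemma arith1 {τ γ₀ q r c : ℝ} (hτ : 0 < τ) (hγ : 0 < γ₀) (hq : 0 ≤ q) (hc1 : 1 < c)
    (hcr : c < r) : τ * γ₀ / r + q / (2 * γ₀) ≤ τ * γ₀ / c + c * q / (2 * γ₀) := by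
  have h5 : τ * γ₀ / r ≤ τ * γ₀ / c := by
    have h8 : τ * γ₀ * c ≤ τ * γ₀ * r :=
      mul_le_mul_of_nonneg_left hcr.le (by positivity : (0:ℝ) ≤ τ * γ₀)
    rw [div_le_div_iff₀ (by linarith) (by linarith)]
    linarith
  have h6 : q / (2 * γ₀) ≤ c * q / (2 * γ₀) := by
    have h9 : q ≤ c * q := le_mul_of_one_le_left hq hc1.le
    rw [div_le_div_iff₀ (by linarith) (by linarith)]
    nlinarith
  linarith

/-- Lower bound construction for part 1, at scale `r > 1`. -/
lemma esupp_lev_lb_r (hUne : U.Nonempty) (hUcl : IsClosed U) (hUcv : Convex ℝ U)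
    (hU0 : (0 : En n) ∈ U)
    (hsymm : ∀ x y : En n, (inner ℝ (B x) y : ℝ) = (inner ℝ x (B y) : ℝ))
    (hpsd : ∀ x : En n, 0 ≤ (inner ℝ x (B x) : ℝ)) (hτ : 0 < τ)
    (hS : (gset U w).Nonempty) (hγpos : 0 < sInf (gset U w)) {r : ℝ} (hr : 1 < r)
    (hrq : (inner ℝ w (B w) : ℝ) * r ^ 2 ≤ 2 * τ * (sInf (gset U w)) ^ 2) :
    ((τ * sInf (gset U w) / r + (inner ℝ w (B w) : ℝ) / (2 * sInf (gset U w)) : ℝ) : EReal)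
      ≤ esupp {x : En n | qsFn U B x ≤ (τ : EReal)} w := by
  set q : ℝ := (inner ℝ w (B w) : ℝ) with hqdef
  have hq0 : 0 ≤ q := hpsd w
  set γ₀ := sInf (gset U w) with hγdef
  set u : En n := γ₀⁻¹ • w with hudef
  have huU : u ∈ U := (Set.mem_smul_set_iff_inv_smul_mem₀ hγpos.ne' _ _).mp
    (gset_inf_mem hUcl hS hγpos).2
  have hw : γ₀ • u = w := smul_inv_smul₀ hγpos.ne' w
  have hru : r • u ∉ U := by
    intro hruU
    have hmem : γ₀ / r ∈ gset U w := by
      refine ⟨by positivity, ⟨r • u, hruU, ?_⟩⟩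
      show (γ₀ / r) • (r • u) = w
      rw [smul_smul, div_mul_cancel₀ _ (by positivity : r ≠ 0).symm.symm]
      exact hw
    have := csInf_le gset_bddBelow hmem
    have := div_lt_self hγpos hr
    linarith
  obtain ⟨f, c', hfU, hfr⟩ := geometric_hahn_banach_closed_point hUcv hUcl hru
  obtain ⟨z₀, hz₀⟩ : ∃ v : En n, ∀ x, f x = (inner ℝ v x : ℝ) := by
    refine ⟨(InnerProductSpace.toDual ℝ _).symm f, fun x => ?_⟩
    rw [← InnerProductSpace.toDual_apply_apply, (InnerProductSpace.toDual ℝ _).apply_symm_apply]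
  set d : ℝ := f u with hddef
  have hdc : d < c' := hfU u huU
  have hc'0 : 0 < c' := by
    have := hfU 0 hU0
    rwa [map_zero] at this
  have hfru : f (r • u) = r * d := by rw [map_smul]; rfl
  have hd0 : 0 < d := by
    rw [hfru] at hfr
    nlinarith
  set c : ℝ := c' / d with hcdef
  have hc1 : 1 < c := (one_lt_div hd0).mpr hdc
  have hcr : c < r := by
    rw [hcdef, div_lt_iff₀ hd0]
    rw [hfru] at hfr
    linarith
  set z : En n := d⁻¹ • z₀ with hzdef
  have hzu : (inner ℝ z u : ℝ) = 1 := by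
    rw [hzdef, real_inner_smul_left, ← hz₀, ← hddef, inv_mul_cancel₀ hd0.ne']
  have hzU : ∀ a ∈ U, (inner ℝ z a : ℝ) ≤ c := by
    intro a ha
    rw [hzdef, real_inner_smul_left, ← hz₀, hcdef, div_eq_inv_mul]
    exact mul_le_mul_of_nonneg_left (hfU a ha).le (by positivity)
  set t : ℝ := (τ - c ^ 2 * q / (2 * γ₀ ^ 2)) / c with htdef
  have htc : c ^ 2 * q ≤ 2 * τ * γ₀ ^ 2 := by
    have hcc : c ^ 2 ≤ r ^ 2 := by nlinarith
    have h7 : c ^ 2 * q ≤ r ^ 2 * q := mul_le_mul_of_nonneg_right hcc hq0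
    nlinarith
  have ht0 : 0 ≤ t := by
    apply div_nonneg _ (by positivity)
    rw [sub_nonneg, div_le_iff₀ (by positivity)]
    linarith
  set x : En n := (c / γ₀) • (B w) + t • z with hxdef
  have hxC : x ∈ {x : En n | qsFn U B x ≤ (τ : EReal)} := by
    rw [Set.mem_setOf_eq, qsFn_le_iff]
    intro u' hu'
    have h1 : (inner ℝ x u' : ℝ)
        = (c / γ₀) * (inner ℝ (B w) u' : ℝ) + t * (inner ℝ z u' : ℝ) := by
      rw [hxdef, inner_add_left, real_inner_smul_left, real_inner_smul_left]
    have hk := key_ineq hsymm hpsd (c / γ₀) w u'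
    have h2 : t * (inner ℝ z u' : ℝ) ≤ t * c :=
      mul_le_mul_of_nonneg_left (hzU u' hu') ht0
    have h3 : (c / γ₀) ^ 2 / 2 * q + t * c = τ := by
      rw [htdef, div_mul_cancel₀ _ (by positivity : c ≠ 0).symm.symm]
      field_simp
      ring
    rw [h1]
    linarith
  have hwz : (inner ℝ w z : ℝ) = γ₀ := by
    rw [← hw, real_inner_smul_left, real_inner_comm, hzu, mul_one]
  have hval : (inner ℝ w x : ℝ) = τ * γ₀ / c + c * q / (2 * γ₀) := by
    have h4 : (inner ℝ w x : ℝ) = (c / γ₀) * q + t * γ₀ := by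
      rw [hxdef, inner_add_right, real_inner_smul_right, real_inner_smul_right, hwz, ← hqdef]
    rw [h4, htdef]
    field_simp
    ring
  have hfinal : τ * γ₀ / r + q / (2 * γ₀) ≤ (inner ℝ w x : ℝ) := by
    rw [hval]
    exact arith1 hτ hγpos hq0 hc1 hcr
  calc ((τ * γ₀ / r + q / (2 * γ₀) : ℝ) : EReal)
      ≤ ((inner ℝ w x : ℝ) : EReal) := EReal.coe_le_coe_iff.mpr hfinal
    _ ≤ _ := le_iSup₂ (f := fun x (_ : x ∈ {x : En n | qsFn U B x ≤ (τ : EReal)}) =>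
        ((inner ℝ w x : ℝ) : EReal)) x hxC

lemma esupp_lev_top (hUne : U.Nonempty) (hUcl : IsClosed U) (hUcv : Convex ℝ U)
    (hU0 : (0 : En n) ∈ U)
    (hpsd : ∀ x : En n, 0 ≤ (inner ℝ x (B x) : ℝ)) (hτ : 0 < τ)
    (hS : ¬ (gset U w).Nonempty) :
    esupp {x : En n | qsFn U B x ≤ (τ : EReal)} w = ⊤ := by
  by_contra hne
  have h0le := esupp_lev_nonneg (B := B) (w := w) hU0 hpsd hτ.le
  have hbot : esupp {x : En n | qsFn U B x ≤ (τ : EReal)} w ≠ ⊥ := by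
    intro h
    rw [h] at h0le
    exact absurd h0le (by simp)
  set σ := esupp {x : En n | qsFn U B x ≤ (τ : EReal)} w with hσ
  set m : ℝ := σ.toReal with hmdef
  have hm : ((m : ℝ) : EReal) = σ := EReal.coe_toReal hne hbot
  have hm0 : (0:ℝ) ≤ m := by
    rw [← EReal.coe_le_coe_iff (x := 0)]
    rw [hm]
    exact_mod_cast h0le
  set M : ℝ := m + 1 with hMdef
  have hM : 0 < M := by linarith
  have hub : ∀ x ∈ {x : En n | qsFn U B x ≤ (τ : EReal)}, (inner ℝ w x : ℝ) ≤ m := by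
    intro x hx
    rw [← EReal.coe_le_coe_iff, hm]
    exact le_iSup₂ (f := fun x (_ : x ∈ {x : En n | qsFn U B x ≤ (τ : EReal)}) =>
      ((inner ℝ w x : ℝ) : EReal)) x hx
  set K : Set (En n) := (M / τ) • U with hKdef
  have hKcl : IsClosed K := hUcl.smul_of_ne_zero (by positivity)
  have hKcv : Convex ℝ K := hUcv.smul _
  have hwK : w ∉ K := fun h => hS ⟨M / τ, by positivity, h⟩
  obtain ⟨f, c', hfK, hfw⟩ := geometric_hahn_banach_closed_point hKcv hKcl hwK
  obtain ⟨z₀, hz₀⟩ : ∃ v : En n, ∀ x, f x = (inner ℝ v x : ℝ) := by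
    refine ⟨(InnerProductSpace.toDual ℝ _).symm f, fun x => ?_⟩
    rw [← InnerProductSpace.toDual_apply_apply, (InnerProductSpace.toDual ℝ _).apply_symm_apply]
  have h0K : (0 : En n) ∈ K := ⟨0, hU0, smul_zero _⟩
  have hc'0 : 0 < c' := by
    have := hfK 0 h0K
    rwa [map_zero] at this
  have hfu : ∀ u ∈ U, f u ≤ c' * τ / M := by
    intro u hu
    have h1 := hfK ((M / τ) • u) ⟨u, hu, rfl⟩
    rw [map_smul, smul_eq_mul] at h1
    have h2 : f u = (τ / M) * ((M / τ) * f u) := by field_simp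
    calc f u = (τ / M) * ((M / τ) * f u) := h2
      _ ≤ (τ / M) * c' := mul_le_mul_of_nonneg_left h1.le (by positivity)
      _ = c' * τ / M := by ring
  set x : En n := (M / c') • z₀ with hxdef
  have hxC : x ∈ {x : En n | qsFn U B x ≤ (τ : EReal)} := by
    rw [Set.mem_setOf_eq, qsFn_le_iff]
    intro u hu
    have h1 : (inner ℝ x u : ℝ) = (M / c') * f u := by
      rw [hxdef, real_inner_smul_left, hz₀]
    have h2 : (M / c') * f u ≤ (M / c') * (c' * τ / M) :=
      mul_le_mul_of_nonneg_left (hfu u hu) (by positivity)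
    have h3 : (M / c') * (c' * τ / M) = τ := by field_simp
    have := hpsd u
    rw [h1]
    linarith
  have hwx : (inner ℝ w x : ℝ) = (M / c') * f w := by
    rw [hxdef, real_inner_smul_right, hz₀, real_inner_comm]
  have hgt : m < (inner ℝ w x : ℝ) := by
    rw [hwx]
    have h4 : (M / c') * c' < (M / c') * f w :=
      mul_lt_mul_of_pos_left hfw (by positivity)
    have h5 : (M / c') * c' = M := by field_simp
    rw [hMdef] at h5
    linarith
  exact absurd (hub x hxC) (not_le.mpr hgt)

lemma two_smul_top : (2 : EReal) * (⊤ : EReal) = ⊤ := by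
  rw [show (2 : EReal) = ((2 : ℝ) : EReal) by norm_cast]
  exact EReal.coe_mul_top_of_pos two_pos

lemma coe_arith (a b : ℝ) :
    ((a : ℝ) : EReal) * ((b : ℝ) : EReal) = ((a * b : ℝ) : EReal) := (EReal.coe_mul a b).symm

/-- Part 1. -/
lemma esupp_lev_of_lt (hUne : U.Nonempty) (hUcl : IsClosed U) (hUcv : Convex ℝ U)
    (hU0 : (0 : En n) ∈ U)
    (hsymm : ∀ x y : En n, (inner ℝ (B x) y : ℝ) = (inner ℝ x (B y) : ℝ))
    (hpsd : ∀ x : En n, 0 ≤ (inner ℝ x (B x) : ℝ)) (hτ : 0 < τ)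
    (hlt : (((Real.sqrt (inner ℝ w (B w) : ℝ) / Real.sqrt (2 * τ) : ℝ)) : EReal) < egaugeFn U w) :
    esupp {x : En n | qsFn U B x ≤ (τ : EReal)} w =
      (τ : EReal) * egaugeFn U w +
        ((((inner ℝ w (B w) : ℝ)) : EReal) / (2 * egaugeFn U w)) := by
  set q : ℝ := (inner ℝ w (B w) : ℝ) with hqdef
  have hq0 : 0 ≤ q := hpsd w
  set b : ℝ := Real.sqrt q with hbdef
  set s : ℝ := Real.sqrt (2 * τ) with hsdef
  have hs : 0 < s := Real.sqrt_pos.mpr (by linarith)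
  have hs2 : s ^ 2 = 2 * τ := Real.sq_sqrt (by linarith)
  have hb2 : b ^ 2 = q := Real.sq_sqrt hq0
  have hb0 : 0 ≤ b := Real.sqrt_nonneg _
  by_cases hS : (gset U w).Nonempty
  · rw [gauge_eq_coe hS] at hlt ⊢
    set γ₀ := sInf (gset U w) with hγdef
    have hbs : b / s < γ₀ := EReal.coe_lt_coe_iff.mp hlt
    have hγpos : 0 < γ₀ := lt_of_le_of_lt (by positivity) hbs
    have hRHS : (τ : EReal) * ((γ₀ : ℝ) : EReal) + ((q : ℝ) : EReal) / (2 * ((γ₀ : ℝ) : EReal))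
        = ((τ * γ₀ + q / (2 * γ₀) : ℝ) : EReal) := by
      rw [show (2 : EReal) = ((2 : ℝ) : EReal) by norm_cast, coe_arith, coe_arith,
        ← EReal.coe_div, ← EReal.coe_add]
    rw [hRHS]
    apply le_antisymm
    · exact esupp_lev_ub hγpos (mem_smul_of_inf_le hUcl hUcv hU0 hUne hS hγpos le_rfl)
    · have hqlt : q < 2 * τ * γ₀ ^ 2 := by
        rw [div_lt_iff₀ hs] at hbs
        nlinarith
      set rk : ℕ → ℝ := fun k => 1 + ((k : ℝ) + 1)⁻¹ with hrkdef
      have hrk1 : ∀ k, 1 < rk k := fun k => lt_add_of_pos_right 1 (by positivity)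
      have hrktend : Filter.Tendsto rk Filter.atTop (nhds 1) := by
        have h2 : Filter.Tendsto (fun k : ℕ => ((k : ℝ) + 1)⁻¹) Filter.atTop (nhds 0) :=
          tendsto_one_div_add_atTop_nhds_zero_nat.congr (by simp [one_div])
        simpa using tendsto_const_nhds.add h2
      have hcond : ∀ᶠ k in Filter.atTop, q * (rk k) ^ 2 ≤ 2 * τ * γ₀ ^ 2 := by
        have h3 : Filter.Tendsto (fun k => q * (rk k) ^ 2) Filter.atTop (nhds (q * 1 ^ 2)) :=
          (hrktend.pow 2).const_mul q
        have h4 : q * 1 ^ 2 < 2 * τ * γ₀ ^ 2 := by nlinarith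
        exact (h3.eventually_lt_const h4).mono fun k hk => hk.le
      have hvtend : Filter.Tendsto (fun k => τ * γ₀ / (rk k) + q / (2 * γ₀)) Filter.atTop
          (nhds (τ * γ₀ + q / (2 * γ₀))) := by
        have h5 : Filter.Tendsto (fun k => τ * γ₀ / (rk k)) Filter.atTop (nhds (τ * γ₀ / 1)) :=
          tendsto_const_nhds.div hrktend one_ne_zero
        rw [div_one] at h5
        simpa using h5.add (tendsto_const_nhds (x := q / (2 * γ₀)))
      exact le_of_tendsto (EReal.tendsto_coe.mpr hvtend)
        (hcond.mono fun k hk =>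
          esupp_lev_lb_r hUne hUcl hUcv hU0 hsymm hpsd hτ hS hγpos (hrk1 k) hk)
  · rw [gaugeNE_eq_top hS, esupp_lev_top hUne hUcl hUcv hU0 hpsd hτ hS, two_smul_top,
      EReal.div_top, EReal.coe_mul_top_of_pos hτ, add_zero]

end Part1


section Part3
variable {n : ℕ} {U : Set (En n)} {B : En n →L[ℝ] En n} {w : En n}

lemma gset_inf_zero_of_smul (htw : ∀ t : ℝ, 0 ≤ t → t • w ∈ U) :
    (gset U w).Nonempty ∧ sInf (gset U w) = 0 := by
  have hmem : ∀ lam : ℝ, 0 < lam → lam ∈ gset U w := fun lam hl =>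
    ⟨hl.le, (Set.mem_smul_set_iff_inv_smul_mem₀ hl.ne' _ _).mpr (htw lam⁻¹ (by positivity))⟩
  have hne : (gset U w).Nonempty := ⟨1, hmem 1 one_pos⟩
  refine ⟨hne, le_antisymm ?_ (gset_inf_nonneg hne)⟩
  by_contra h
  push_neg at h
  have := csInf_le gset_bddBelow (hmem (sInf (gset U w) / 2) (by positivity))
  linarith

lemma part3_arith {τ q γ₀ μ μ' : ℝ} (hτ : 0 < τ) (hq : 0 ≤ q) (hγ : 0 ≤ γ₀)
    (hμ : μ = max γ₀ (Real.sqrt q / Real.sqrt (2 * τ))) (hμpos : 0 < μ) (hμ'pos : 0 < μ')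
    (hγμ' : γ₀ ≤ μ') : τ * μ + q / (2 * μ) ≤ τ * μ' + q / (2 * μ') := by
  set b : ℝ := Real.sqrt q with hbdef
  set s : ℝ := Real.sqrt (2 * τ) with hsdef
  have hs : 0 < s := Real.sqrt_pos.mpr (by linarith)
  have hs2 : s ^ 2 = 2 * τ := Real.sq_sqrt (by linarith)
  have hb2 : b ^ 2 = q := Real.sq_sqrt hq
  have hb0 : 0 ≤ b := Real.sqrt_nonneg _
  have hbs : b / s ≤ μ := hμ ▸ le_max_right _ _
  rcases le_or_gt μ μ' with h | h
  · have h1 : q ≤ 2 * τ * μ ^ 2 := by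
      rw [div_le_iff₀ hs] at hbs
      nlinarith
    have h2 : q ≤ 2 * τ * (μ * μ') := by nlinarith
    have hd : q / (2 * μ) - q / (2 * μ') = q * (μ' - μ) / (2 * (μ * μ')) := by
      field_simp
    have h3 : q * (μ' - μ) / (2 * (μ * μ')) ≤ τ * (μ' - μ) := by
      rw [div_le_iff₀ (by positivity)]
      nlinarith [mul_le_mul_of_nonneg_right h2 (sub_nonneg.mpr h)]
    linarith
  · have hμeq : μ = b / s := by
      rcases max_choice γ₀ (b / s) with hc | hc
      · rw [hμ, hc] at h ⊢
        linarith
      · rw [hμ, hc]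
    have hbpos : 0 < b := by
      rw [hμeq] at hμpos
      by_contra hb
      push_neg at hb
      have : b = 0 := le_antisymm hb hb0
      rw [this] at hμpos
      simp at hμpos
    have hqpos : 0 < q := by nlinarith
    have hkey : 2 * (s * b) * μ' ≤ 2 * τ * μ' ^ 2 + q := by nlinarith [sq_nonneg (s * μ' - b)]
    have hLHS : τ * μ + q / (2 * μ) = s * b := by
      rw [hμeq]
      field_simp
      nlinarith [hs2, hb2]
    have h6 : (2 * τ * μ' ^ 2 + q - 2 * (s * b) * μ') / (2 * μ') = τ * μ' + q / (2 * μ') - s * b := by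
      field_simp
    have h7 : 0 ≤ (2 * τ * μ' ^ 2 + q - 2 * (s * b) * μ') / (2 * μ') :=
      div_nonneg (by linarith) (by positivity)
    rw [hLHS]
    linarith
end Part3

/-- explicit formula for the support function of `lev(φ,τ)` for a
quadratic support function `φ`, and attainment of
`inf_{λ ≥ 0}[τλ + (φ*)^π(w,λ)]` at `λ = max{γ(w|U), ‖w‖_B/√(2τ)}`. -/
theorem stmt14 {n : ℕ} (U : Set (En n))
    (hUne : U.Nonempty) (hUcl : IsClosed U) (hUcv : Convex ℝ U) (hU0 : (0 : En n) ∈ U)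
    (B : En n →L[ℝ] En n)
    (hsymm : ∀ x y : En n, (inner ℝ (B x) y : ℝ) = (inner ℝ x (B y) : ℝ))
    (hpsd : ∀ x : En n, 0 ≤ (inner ℝ x (B x) : ℝ))
    (τ : ℝ) (hτ : 0 < τ) (w : En n) :
    ((((Real.sqrt (inner ℝ w (B w) : ℝ) / Real.sqrt (2 * τ) : ℝ)) : EReal) < egaugeFn U w →
      esupp {x : En n | qsFn U B x ≤ (τ : EReal)} w =
        (τ : EReal) * egaugeFn U w +
          ((((inner ℝ w (B w) : ℝ)) : EReal) / (2 * egaugeFn U w))) ∧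
    (egaugeFn U w ≤ (((Real.sqrt (inner ℝ w (B w) : ℝ) / Real.sqrt (2 * τ) : ℝ)) : EReal) →
      esupp {x : En n | qsFn U B x ≤ (τ : EReal)} w =
        (((Real.sqrt (2 * τ) * Real.sqrt (inner ℝ w (B w) : ℝ) : ℝ)) : EReal)) ∧
    (∀ μ : ℝ, 0 ≤ μ →
      (μ : EReal) =
          max (egaugeFn U w)
            (((Real.sqrt (inner ℝ w (B w) : ℝ) / Real.sqrt (2 * τ) : ℝ)) : EReal) →
      (((τ * μ : ℝ)) : EReal) + epersp (econj (qsFn U B)) (w, μ) =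
        ⨅ μ' : ℝ, ⨅ _ : 0 ≤ μ',
          (((τ * μ' : ℝ)) : EReal) + epersp (econj (qsFn U B)) (w, μ')) := by
  refine ⟨esupp_lev_of_lt hUne hUcl hUcv hU0 hsymm hpsd hτ,
          esupp_lev_of_le hUne hUcl hUcv hU0 hsymm hpsd hτ, ?_⟩
  intro μ hμ0 hmax
  set q : ℝ := (inner ℝ w (B w) : ℝ) with hqdef
  have hq0 : 0 ≤ q := hpsd w
  set b : ℝ := Real.sqrt q with hbdef
  set s : ℝ := Real.sqrt (2 * τ) with hsdef
  have hs : 0 < s := Real.sqrt_pos.mpr (by linarith)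
  have hb0 : 0 ≤ b := Real.sqrt_nonneg _
  have hS : (gset U w).Nonempty := by
    by_contra h
    rw [gaugeNE_eq_top h, max_eq_left le_top] at hmax
    exact EReal.coe_ne_top μ hmax
  rw [gauge_eq_coe hS] at hmax
  set γ₀ := sInf (gset U w) with hγdef
  have hγ0 : 0 ≤ γ₀ := gset_inf_nonneg hS
  have hmax' : μ = max γ₀ (b / s) := by
    have h1 : ((max γ₀ (b / s) : ℝ) : EReal) = max ((γ₀ : ℝ) : EReal) (((b / s : ℝ)) : EReal) :=
      Monotone.map_max fun _ _ h => EReal.coe_le_coe_iff.mpr h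
    rw [← h1] at hmax
    exact EReal.coe_eq_coe_iff.mp hmax
  apply le_antisymm
  · apply le_iInf₂
    intro μ' hμ'0
    rcases eq_or_lt_of_le hμ'0 with hz | hpos'
    · -- μ' = 0
      rw [← hz]
      by_cases hcase : (∀ t : ℝ, 0 ≤ t → t • w ∈ U) ∧ q = 0
      · have h0 := gset_inf_zero_of_smul hcase.1
        have hb : b = 0 := by rw [hbdef, hcase.2, Real.sqrt_zero]
        have hμz : μ = 0 := by
          rw [hmax', hγdef, h0.2, hb, zero_div, max_self]
        rw [hμz]
      · rw [epersp_zero_s14, ehorizon_top hUcl hUcv hU0 hsymm hpsd hcase, EReal.coe_add_top]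
        exact le_top
    · -- μ' > 0
      rw [epersp_pos_s14 hUcl hUcv hU0 hsymm hpsd hpos']
      by_cases hw' : w ∈ μ' • U
      · rw [if_pos hw']
        have hγμ' : γ₀ ≤ μ' := csInf_le gset_bddBelow ⟨hμ'0, hw'⟩
        rcases eq_or_lt_of_le hμ0 with hz0 | hpos
        · -- μ = 0
          have hγz : γ₀ = 0 := by
            have := le_max_left γ₀ (b / s)
            rw [← hmax', ← hz0] at this
            linarith
          have hbsz : b / s ≤ 0 := by
            have := le_max_right γ₀ (b / s)
            rw [← hmax', ← hz0] at this
            exact_mod_cast this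
          have hqz : q = 0 := by
            have hb1 : b ≤ 0 := by
              rw [div_le_iff₀ hs] at hbsz
              simpa using hbsz
            have hb2 : b = 0 := le_antisymm hb1 hb0
            have := Real.sqrt_eq_zero'.mp hb2
            linarith
          have htw := gset_zero_smul hUcv hU0 hUne hS hγz
          rw [← hz0, epersp_zero_s14, ehorizon_of_zero hUcl hUcv hU0 hsymm hpsd htw hqz,
            add_zero, ← hqdef, hqz]
          rw [← EReal.coe_add, EReal.coe_le_coe_iff]
          have : (0:ℝ) / (2 * μ') = 0 := by norm_num
          rw [this]
          nlinarith
        · -- μ > 0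
          have hwμ : w ∈ μ • U := mem_smul_of_inf_le hUcl hUcv hU0 hUne hS hpos
            (by rw [hmax']; exact le_max_left _ _)
          rw [epersp_pos_s14 hUcl hUcv hU0 hsymm hpsd hpos, if_pos hwμ,
            ← EReal.coe_add, ← EReal.coe_add, EReal.coe_le_coe_iff]
          exact part3_arith hτ hq0 hγ0 hmax' hpos hpos' hγμ'
      · rw [if_neg hw', EReal.coe_add_top]
        exact le_top
  · exact iInf₂_le μ hμ0
end
end
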